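/- arXiv:0803.1659 — 4 statements merged into one kernel-verified Lean document; each statement's English description precedes it below -/
import Mathlib

section
/- Let G = (V,E) be a finite graph with nonnegative real edge weights, and let f, g : V → ℕ satisfy f(v) ≤ g(v) ≤ f(v)+1 for each v. With activities u_k^{(v)} = 1 if f(v) ≤ k ≤ g(v) and 0 otherwise, the polynomial Z(G,λ,u;x) = Σ_{H⊆E : f(v) ≤ deg(H,v) ≤ g(v) ∀v} λ^H Π_v x_v^{deg(H,v)} is either identically zero or nonzero whenever all x_v lie in the sector {z ≠ 0 : |arg z| < π/2}. -/
open Real Polynomial Finset Filter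

namespace WagnerAux


/-- All roots outside the closed disk of radius ρ around 0 implies a comparison
between values inside the disk. -/
lemma disk_bound (p : Polynomial ℂ) (N : ℕ) (hN : p.natDegree ≤ N)
    (ρ : ℝ) (z₁ : ℂ) (hz₁ : ‖z₁‖ ≤ ρ)
    (hroots : ∀ α : ℂ, p.IsRoot α → ρ < ‖α‖) :
    ‖(p.eval z₁)‖ ≤ 3 ^ N * ‖(p.eval 0)‖ := by
  rcases eq_or_ne p 0 with rfl | hp
  · simp
  have hsplit : p.Splits := IsAlgClosed.splits p
  have hfac := hsplit.eq_prod_roots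
  have hρ0 : 0 ≤ ρ := le_trans (norm_nonneg z₁) hz₁
  have key : ∀ z : ℂ, p.eval z = p.leadingCoeff * ((p.roots.map fun a => z - a)).prod := by
    intro z
    conv_lhs => rw [hfac]
    rw [eval_mul, eval_C, eval_multiset_prod]
    congr 1
    rw [Multiset.map_map]
    congr 1
    apply Multiset.map_congr rfl
    intro a _
    simp
  have hmem : ∀ a ∈ p.roots, ρ < ‖a‖ := by
    intro a ha
    exact hroots a (Polynomial.isRoot_of_mem_roots ha)
  -- compare the two products
  have hprod : ‖((p.roots.map fun a => z₁ - a)).prod‖ ≤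
      3 ^ p.roots.card * ‖((p.roots.map fun a => (0:ℂ) - a)).prod‖ := by
    revert hmem
    refine Multiset.induction_on p.roots ?_ ?_
    · intro _; simp
    · intro a s ih hmem
      have hs : ∀ b ∈ s, ρ < ‖b‖ := fun b hb => hmem b (Multiset.mem_cons_of_mem hb)
      have ha : ρ < ‖a‖ := hmem a (Multiset.mem_cons_self a s)
      have h1 : ‖(z₁ - a)‖ ≤ 3 * ‖((0:ℂ) - a)‖ := by
        have : ‖(z₁ - a)‖ ≤ ‖z₁‖ + ‖a‖ := by
          simpa [sub_eq_add_neg] using norm_add_le z₁ (-a)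
        have h0 : ‖((0:ℂ) - a)‖ = ‖a‖ := by simp
        rw [h0]
        nlinarith [norm_nonneg a, norm_nonneg z₁]
      simp only [Multiset.map_cons, Multiset.prod_cons, Multiset.card_cons, norm_mul]
      calc ‖(z₁ - a)‖ * ‖((s.map fun a => z₁ - a)).prod‖
          ≤ (3 * ‖((0:ℂ) - a)‖) *
            (3 ^ s.card * ‖((s.map fun a => (0:ℂ) - a)).prod‖) := by
            exact mul_le_mul h1 (ih hs) (norm_nonneg _) (by positivity)
        _ = 3 ^ (s.card + 1) * (‖((0:ℂ) - a)‖ *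
            ‖((s.map fun a => (0:ℂ) - a)).prod‖) := by ring
  have hcard : p.roots.card ≤ N := le_trans (Polynomial.card_roots' p) hN
  have h3 : (3:ℝ) ^ p.roots.card ≤ 3 ^ N := by
    exact pow_le_pow_right₀ (by norm_num) hcard
  rw [key z₁, key 0, norm_mul, norm_mul]
  calc ‖p.leadingCoeff‖ * ‖((p.roots.map fun a => z₁ - a)).prod‖
      ≤ ‖p.leadingCoeff‖ *
        (3 ^ p.roots.card * ‖((p.roots.map fun a => (0:ℂ) - a)).prod‖) := by
        exact mul_le_mul_of_nonneg_left hprod (norm_nonneg _)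
    _ ≤ 3 ^ N * (‖p.leadingCoeff‖ * ‖((p.roots.map fun a => (0:ℂ) - a)).prod‖) := by
        have h0 : (0:ℝ) ≤ ‖p.leadingCoeff‖ := norm_nonneg _
        have h1 : (0:ℝ) ≤ ‖((p.roots.map fun a => (0:ℂ) - a)).prod‖ := norm_nonneg _
        have heq : ‖p.leadingCoeff‖ *
            (3 ^ p.roots.card * ‖((p.roots.map fun a => (0:ℂ) - a)).prod‖) =
            3 ^ p.roots.card * (‖p.leadingCoeff‖ *
              ‖((p.roots.map fun a => (0:ℂ) - a)).prod‖) := by ring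
        rw [heq]
        exact mul_le_mul_of_nonneg_right h3 (by positivity)



lemma ratio_lemma (z : ℂ) (hz : 0 < z.re) :
    ∀ S : Multiset ℂ, (∀ a ∈ S, a.re ≤ 0) →
      ((S.map fun a => X - C a)).prod.eval z ≠ 0 ∧
      0 ≤ (((S.map fun a => X - C a)).prod.derivative.eval z /
            ((S.map fun a => X - C a)).prod.eval z).re ∧
      (S ≠ 0 → 0 < (((S.map fun a => X - C a)).prod.derivative.eval z /
            ((S.map fun a => X - C a)).prod.eval z).re) := by
  intro S
  refine Multiset.induction_on S ?_ ?_
  · intro _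
    simp
  · intro a s ih hmem
    have hs : ∀ b ∈ s, b.re ≤ 0 := fun b hb => hmem b (Multiset.mem_cons_of_mem hb)
    have ha : a.re ≤ 0 := hmem a (Multiset.mem_cons_self a s)
    obtain ⟨h1, h2, _⟩ := ih hs
    set q : Polynomial ℂ := ((s.map fun a => X - C a)).prod with hq
    have hza : z - a ≠ 0 := by
      intro h
      have : (z - a).re = 0 := by rw [h]; simp
      simp only [Complex.sub_re] at this
      linarith
    have hprod : (((a ::ₘ s).map fun a => X - C a)).prod = (X - C a) * q := by
      simp [hq]
    have heval : (((a ::ₘ s).map fun a => X - C a)).prod.eval z = (z - a) * q.eval z := by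
      rw [hprod]; simp
    have hder : (((a ::ₘ s).map fun a => X - C a)).prod.derivative = q + (X - C a) * q.derivative := by
      rw [hprod, derivative_mul, derivative_X_sub_C, one_mul]
    have hne : (z - a) * q.eval z ≠ 0 := mul_ne_zero hza h1
    refine ⟨by rw [heval]; exact hne, ?_⟩
    have hratio : (((a ::ₘ s).map fun a => X - C a)).prod.derivative.eval z /
        (((a ::ₘ s).map fun a => X - C a)).prod.eval z
        = (z - a)⁻¹ + q.derivative.eval z / q.eval z := by
      rw [heval, hder]
      simp only [eval_add, eval_mul, eval_sub, eval_X, eval_C]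
      field_simp
    have hinv : 0 < ((z - a)⁻¹).re := by
      rw [Complex.inv_re]
      apply div_pos
      · simp only [Complex.sub_re]; linarith
      · have : z - a ≠ 0 := hza
        have := Complex.normSq_pos.2 this
        linarith
    rw [hratio, Complex.add_re]
    constructor
    · linarith
    · intro _
      linarith

/-- Gauss-Lucas style step: derivative of a stable polynomial given by coefficients. -/
lemma gl_step (D : ℕ) (hD : 1 ≤ D) (b : ℕ → ℂ)
    (h1 : ∀ z : ℂ, 0 < z.re → (∑ k ∈ range (D+1), b k * z ^ k) ≠ 0)
    (htop : b D ≠ 0) :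
    ∀ z : ℂ, 0 < z.re → (∑ k ∈ range D, ((k:ℂ)+1) * b (k+1) * z ^ k) ≠ 0 := by
  intro z hz
  set p : Polynomial ℂ := ∑ k ∈ range (D+1), C (b k) * X ^ k with hp
  have heval : ∀ w : ℂ, p.eval w = ∑ k ∈ range (D+1), b k * w ^ k := by
    intro w
    rw [hp, eval_finset_sum]
    simp
  have hcoeff : p.coeff D = b D := by
    rw [hp, finset_sum_coeff]
    simp only [coeff_C_mul, coeff_X_pow]
    rw [Finset.sum_eq_single D]
    · simp
    · intro k _ hk
      rw [if_neg (Ne.symm hk), mul_zero]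
    · intro h; exact absurd (self_mem_range_succ D) h
  have hpne : p ≠ 0 := fun h => htop (by rw [← hcoeff, h, coeff_zero])
  have hdegle : p.natDegree ≤ D := by
    apply natDegree_sum_le_of_forall_le
    intro k hk
    apply le_trans (natDegree_C_mul_le _ _)
    simpa using Nat.lt_succ_iff.1 (mem_range.1 hk)
  have hdeg : p.natDegree = D := le_antisymm hdegle (le_natDegree_of_ne_zero (by rw [hcoeff]; exact htop))
  -- roots have nonpositive real part
  have hroots : ∀ a ∈ p.roots, a.re ≤ 0 := by
    intro a haroot
    by_contra hpos
    push_neg at hpos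
    have : p.eval a = 0 := isRoot_of_mem_roots haroot
    rw [heval] at this
    exact h1 a hpos this
  have hsplit : p.Splits := IsAlgClosed.splits p
  have hfac := hsplit.eq_prod_roots
  have hlead : p.leadingCoeff ≠ 0 := leadingCoeff_ne_zero.2 hpne
  have hSne : p.roots ≠ 0 := by
    intro h
    rw [h] at hfac
    simp only [Multiset.map_zero, Multiset.prod_zero, mul_one] at hfac
    have : p.natDegree = 0 := by rw [hfac]; exact natDegree_C _
    omega
  obtain ⟨hqne, _, hqpos⟩ := ratio_lemma z hz p.roots hroots
  have hqd : ((p.roots.map fun a => X - C a)).prod.derivative.eval z ≠ 0 := by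
    intro h
    rw [h] at hqpos
    simp only [zero_div, Complex.zero_re] at hqpos
    exact lt_irrefl 0 (hqpos hSne)
  have hderiv : p.derivative.eval z ≠ 0 := by
    conv_lhs => rw [hfac]
    rw [derivative_C_mul, eval_mul, eval_C]
    exact mul_ne_zero hlead hqd
  -- now identify the sum with the derivative
  have hdsum : p.derivative.eval z = ∑ k ∈ range D, ((k:ℂ)+1) * b (k+1) * z ^ k := by
    rw [hp, derivative_sum]
    have : ∀ k, derivative (C (b k) * X ^ k) = C (b k) * (C (k:ℂ) * X ^ (k-1)) := by
      intro k
      rw [derivative_C_mul, derivative_X_pow]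
    simp only [this]
    rw [eval_finset_sum]
    simp only [eval_mul, eval_C, eval_pow, eval_X]
    rw [Finset.sum_range_succ' (fun k => b k * ((k:ℂ) * z ^ (k-1)))]
    simp only [Nat.cast_zero, zero_mul, mul_zero, add_zero, Nat.cast_add, Nat.cast_one,
      Nat.add_sub_cancel]
    apply Finset.sum_congr rfl
    intro k _
    push_cast
    ring
  rw [← hdsum]
  exact hderiv

/-- Reversal preserves half-plane non-vanishing. -/
lemma rev_step (D : ℕ) (b : ℕ → ℂ)
    (h1 : ∀ z : ℂ, 0 < z.re → (∑ k ∈ range (D+1), b k * z ^ k) ≠ 0) :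
    ∀ z : ℂ, 0 < z.re → (∑ k ∈ range (D+1), b (D - k) * z ^ k) ≠ 0 := by
  intro z hz
  have hz0 : z ≠ 0 := by intro h; rw [h] at hz; simp at hz
  have hinv : 0 < (z⁻¹).re := by
    rw [Complex.inv_re]
    exact div_pos hz (Complex.normSq_pos.2 hz0)
  have key : (∑ k ∈ range (D+1), b (D - k) * z ^ k) =
      z ^ D * ∑ k ∈ range (D+1), b k * (z⁻¹) ^ k := by
    rw [Finset.mul_sum]
    rw [← Finset.sum_range_reflect (fun k => z ^ D * (b k * z⁻¹ ^ k)) (D+1)]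
    apply Finset.sum_congr rfl
    intro k hk
    have hkD : k ≤ D := Nat.lt_succ_iff.1 (mem_range.1 hk)
    have : D + 1 - 1 - k = D - k := by omega
    rw [this]
    have hpow : z ^ D * z⁻¹ ^ (D - k) = z ^ k := by
      rw [inv_pow, ← div_eq_mul_inv]
      rw [eq_comm, eq_div_iff (pow_ne_zero _ hz0), ← pow_add]
      congr 1
      omega
    calc b (D - k) * z ^ k = b (D - k) * (z ^ D * z⁻¹ ^ (D - k)) := by rw [hpow]
      _ = z ^ D * (b (D - k) * z⁻¹ ^ (D - k)) := by ring
  rw [key]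
  exact mul_ne_zero (pow_ne_zero _ hz0) (h1 z⁻¹ hinv)



variable {V E : Type*} [Fintype V] [DecidableEq V] [Fintype E] [DecidableEq E]

/-- Polynomial function with nonnegative coefficients, indexed by subsets of `E`. -/
def Pos (E : Type*) [Fintype E] [DecidableEq E] {V : Type*} [Fintype V]
    (c : (V → ℂ) → ℂ) : Prop :=
  ∃ (μ : Finset E → ℝ) (e : Finset E → V → ℕ), (∀ H, 0 ≤ μ H) ∧
    ∀ x : V → ℂ, c x = ∑ H : Finset E, (μ H : ℂ) * ∏ v, x v ^ e H v

lemma Pos.natCast_mul {c : (V → ℂ) → ℂ} (h : Pos E c) (n : ℕ) :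
    Pos E (fun x => (n : ℂ) * c x) := by
  obtain ⟨μ, e, hμ, hc⟩ := h
  refine ⟨fun H => n * μ H, e, fun H => mul_nonneg (Nat.cast_nonneg n) (hμ H), fun x => ?_⟩
  simp only []
  rw [hc x, Finset.mul_sum]
  apply Finset.sum_congr rfl
  intro H _
  push_cast
  ring

lemma Pos.eval_one {c : (V → ℂ) → ℂ} (h : Pos E c) :
    ∃ r : ℝ, 0 ≤ r ∧ c (fun _ => 1) = (r : ℂ) := by
  obtain ⟨μ, e, hμ, hc⟩ := h
  refine ⟨∑ H : Finset E, μ H, Finset.sum_nonneg fun H _ => hμ H, ?_⟩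
  rw [hc]
  push_cast
  simp

lemma Pos.zero_of_one {c : (V → ℂ) → ℂ} (h : Pos E c)
    (h0 : c (fun _ => 1) = 0) : ∀ x, c x = 0 := by
  obtain ⟨μ, e, hμ, hc⟩ := h
  have h1 : (∑ H : Finset E, μ H) = 0 := by
    have := hc (fun _ => 1)
    rw [h0] at this
    have h2 : ((∑ H : Finset E, μ H : ℝ) : ℂ) = 0 := by
      rw [this]
      push_cast
      simp
    exact_mod_cast h2
  have hall : ∀ H : Finset E, H ∈ Finset.univ → μ H = 0 :=
    (Finset.sum_eq_zero_iff_of_nonneg (fun H _ => hμ H)).1 h1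
  intro x
  rw [hc]
  apply Finset.sum_eq_zero
  intro H _
  rw [hall H (mem_univ H)]
  simp

lemma Pos.line {c : (V → ℂ) → ℂ} (h : Pos E c) (q : V → ℂ) :
    ∃ p : Polynomial ℂ, ∀ s : ℂ, p.eval s = c (fun v => q v + s * (1 - q v)) := by
  obtain ⟨μ, e, hμ, hc⟩ := h
  refine ⟨∑ H : Finset E, C ((μ H : ℂ)) * ∏ v, (C (q v) + X * C (1 - q v)) ^ e H v, fun s => ?_⟩
  rw [eval_finset_sum, hc]
  apply Finset.sum_congr rfl
  intro H _
  rw [eval_mul, eval_C, eval_prod]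
  congr 1
  apply Finset.prod_congr rfl
  intro v _
  rw [eval_pow, eval_add, eval_C, eval_mul, eval_X, eval_C]

lemma tendsto_scaled (D : ℕ) (a : ℕ → ℂ) :
    Tendsto (fun n : ℕ => (∑ k ∈ range (D+1), a k * ((n:ℂ)+1) ^ k) / ((n:ℂ)+1) ^ D)
      atTop (nhds (a D)) := by
  have hne : ∀ n : ℕ, ((n:ℂ)+1) ≠ 0 := by
    intro n
    intro h
    have : ((n:ℂ)+1).re = 0 := by rw [h]; simp
    simp only [Complex.add_re, Complex.natCast_re, Complex.one_re] at this
    have : (0:ℝ) ≤ (n:ℝ) := Nat.cast_nonneg n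
    linarith
  have heq : ∀ n : ℕ, (∑ k ∈ range (D+1), a k * ((n:ℂ)+1) ^ k) / ((n:ℂ)+1) ^ D
      = ∑ k ∈ range (D+1), a k * (((n:ℂ)+1)⁻¹) ^ (D - k) := by
    intro n
    rw [Finset.sum_div]
    apply Finset.sum_congr rfl
    intro k hk
    have hkD : k ≤ D := Nat.lt_succ_iff.1 (mem_range.1 hk)
    have hsplit : ((n:ℂ)+1) ^ D = ((n:ℂ)+1) ^ k * ((n:ℂ)+1) ^ (D - k) := by
      rw [← pow_add]
      congr 1
      omega
    rw [hsplit, inv_pow]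
    rw [mul_div_assoc]
    congr 1
    rw [div_mul_eq_div_div, div_self (pow_ne_zero _ (hne n)), one_div]
  have hlim : ∀ k ∈ range (D+1),
      Tendsto (fun n : ℕ => a k * (((n:ℂ)+1)⁻¹) ^ (D - k)) atTop
        (nhds (if k = D then a D else 0)) := by
    intro k hk
    by_cases hkD : k = D
    · subst hkD
      simp only [Nat.sub_self, pow_zero, mul_one, if_pos rfl]
      exact tendsto_const_nhds
    · rw [if_neg hkD]
      have hm : D - k ≠ 0 := by
        have := Nat.lt_succ_iff.1 (mem_range.1 hk)
        omega
      have hbase : Tendsto (fun n : ℕ => ((n:ℂ)+1)⁻¹) atTop (nhds 0) := by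
        have hr : Tendsto (fun n : ℕ => (1 / ((n:ℝ)+1) : ℝ)) atTop (nhds 0) :=
          tendsto_one_div_add_atTop_nhds_zero_nat
        have := (Complex.continuous_ofReal.tendsto 0).comp hr
        apply this.congr
        intro n
        simp only [Function.comp_apply, one_div, Complex.ofReal_inv]
        push_cast
        ring
      have := hbase.pow (D - k)
      rw [zero_pow hm] at this
      have := this.const_mul (a k)
      simpa using this
  have hsum := tendsto_finset_sum (range (D+1)) hlim
  have hval : (∑ k ∈ range (D+1), if k = D then a D else 0) = a D := by
    rw [Finset.sum_ite_eq' (range (D+1)) D (fun _ => a D)]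
    simp
  rw [hval] at hsum
  exact hsum.congr fun n => (heq n).symm






/-- Extraction of the top coefficient preserves non-vanishing on the polydisc. -/
theorem top_coeff (c : ℕ → (V → ℂ) → ℂ) (D : ℕ)
    (hPos : ∀ k, Pos E (c k))
    (h1 : ∀ x : V → ℂ, (∀ v, 0 < (x v).re) → ∀ z : ℂ, 0 < z.re →
      (∑ k ∈ range (D+1), c k x * z ^ k) ≠ 0)
    (htop : c D (fun _ => 1) ≠ 0) :
    ∀ x : V → ℂ, (∀ v, 0 < (x v).re) → c D x ≠ 0 := by
  intro x₀ hx₀ hc0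
  -- the line from x₀ towards the all-ones vector
  set ℓ : ℂ → V → ℂ := fun s v => x₀ v + s * (1 - x₀ v) with hℓ
  have hℓ0 : ℓ 0 = x₀ := by funext v; simp [hℓ]
  have hℓ1 : ℓ 1 = fun _ => (1:ℂ) := by funext v; simp [hℓ]
  -- a radius ρ keeping the line inside the domain
  obtain ⟨ρ, hρ0, hρ⟩ : ∃ ρ : ℝ, 0 < ρ ∧ ∀ s : ℂ, ‖s‖ ≤ ρ →
      ∀ v, 0 < ((ℓ s) v).re := by
    rcases isEmpty_or_nonempty V with hV | hV
    · exact ⟨1, one_pos, fun s _ v => (IsEmpty.false v).elim⟩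
    · refine ⟨Finset.univ.inf' Finset.univ_nonempty
        (fun v => (x₀ v).re / (‖(1 - x₀ v)‖ + 1)), ?_, ?_⟩
      · rw [Finset.lt_inf'_iff]
        intro v _
        exact div_pos (hx₀ v) (by positivity)
      · intro s hs v
        have hle : Finset.univ.inf' Finset.univ_nonempty
            (fun v => (x₀ v).re / (‖(1 - x₀ v)‖ + 1)) ≤
            (x₀ v).re / (‖(1 - x₀ v)‖ + 1) :=
          Finset.inf'_le _ (mem_univ v)
        set A := ‖(1 - x₀ v)‖ with hA
        have hA0 : 0 ≤ A := norm_nonneg _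
        have hsA : ‖s‖ ≤ (x₀ v).re / (A + 1) := le_trans hs hle
        have hmul : ‖s‖ * A ≤ ((x₀ v).re / (A + 1)) * A :=
          mul_le_mul_of_nonneg_right hsA hA0
        have hfrac : ((x₀ v).re / (A + 1)) * (A + 1) = (x₀ v).re := by
          field_simp
        have habs : ‖(s * (1 - x₀ v))‖ = ‖s‖ * A := by
          rw [norm_mul]
        have hrebd : -(‖s‖ * A) ≤ (s * (1 - x₀ v)).re := by
          rw [← habs]
          have := Complex.abs_re_le_norm (s * (1 - x₀ v))
          have := abs_le.1 this
          linarith [this.1]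
        have hρA : ((x₀ v).re / (A + 1)) ≤ (x₀ v).re / (A+1) := le_refl _
        have hxv := hx₀ v
        have hfr : ((x₀ v).re / (A + 1)) * A < (x₀ v).re := by
          nlinarith [div_pos hxv (show (0:ℝ) < A + 1 by linarith)]
        simp only [hℓ, Complex.add_re]
        linarith
  -- line restrictions of the coefficients
  have hline : ∀ k, ∃ p : Polynomial ℂ, ∀ s : ℂ, p.eval s = c k (ℓ s) := by
    intro k
    obtain ⟨p, hp⟩ := (hPos k).line x₀
    exact ⟨p, fun s => hp s⟩
  choose γ hγ using hline
  set N := (range (D+1)).sup fun k => (γ k).natDegree with hN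
  have hγD1 : (γ D).eval 1 ≠ 0 := by
    rw [hγ D 1, hℓ1]
    exact htop
  have hγDne : γ D ≠ 0 := fun h => hγD1 (by rw [h]; simp)
  -- choose a point z₁ in the disk where γ D does not vanish
  obtain ⟨z₁, hz₁ρ, hz₁⟩ : ∃ z₁ : ℂ, ‖z₁‖ ≤ ρ ∧ (γ D).eval z₁ ≠ 0 := by
    by_contra hcon
    push_neg at hcon
    apply hγDne
    apply Polynomial.eq_zero_of_infinite_isRoot
    apply Set.infinite_of_injective_forall_mem
      (f := fun j : ℕ => ((ρ / ((j:ℝ)+1) : ℝ) : ℂ)) ?_ ?_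
    · intro a b hab
      have h : ρ / ((a:ℝ)+1) = ρ / ((b:ℝ)+1) := by
        have h0 : ((ρ / ((a:ℝ)+1) : ℝ) : ℂ) = ((ρ / ((b:ℝ)+1) : ℝ) : ℂ) := hab
        exact_mod_cast h0
      have ha : ((a:ℝ)+1) ≠ 0 := by positivity
      have hb : ((b:ℝ)+1) ≠ 0 := by positivity
      rw [div_eq_div_iff ha hb] at h
      have h2 := mul_left_cancel₀ (ne_of_gt hρ0) h
      exact_mod_cast (by linarith : (a:ℝ) = b)
    · intro j
      have hmem : ‖((ρ / ((j:ℝ)+1) : ℝ) : ℂ)‖ ≤ ρ := by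
        rw [Complex.norm_real, Real.norm_eq_abs]
        rw [abs_of_nonneg (by positivity)]
        rw [div_le_iff₀ (by positivity)]
        nlinarith [Nat.cast_nonneg (α := ℝ) j]
      exact hcon _ hmem
  -- the scaled family of polynomials
  set Q : ℕ → Polynomial ℂ := fun n => ∑ k ∈ range (D+1), C (((n:ℝ)+1 : ℂ)) ^ k * γ k with hQ
  have hQeval : ∀ n : ℕ, ∀ s : ℂ, (Q n).eval s =
      ∑ k ∈ range (D+1), c k (ℓ s) * ((n:ℂ)+1) ^ k := by
    intro n s
    rw [hQ, eval_finset_sum]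
    apply Finset.sum_congr rfl
    intro k _
    rw [eval_mul, eval_pow, eval_C, hγ k s]
    push_cast
    ring
  have hQdeg : ∀ n, (Q n).natDegree ≤ N := by
    intro n
    apply natDegree_sum_le_of_forall_le
    intro k hk
    calc (C (((n:ℝ)+1 : ℂ)) ^ k * γ k).natDegree
        ≤ (C (((n:ℝ)+1 : ℂ)) ^ k).natDegree + (γ k).natDegree := natDegree_mul_le
      _ ≤ (γ k).natDegree := by
          rw [← map_pow, natDegree_C, zero_add]
      _ ≤ N := Finset.le_sup (f := fun k => (γ k).natDegree) hk
  have hQroots : ∀ n, ∀ α : ℂ, (Q n).IsRoot α → ρ < ‖α‖ := by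
    intro n α hα
    by_contra hle
    push_neg at hle
    have hΩ := hρ α hle
    have hre : (0:ℝ) < (((n:ℂ)+1)).re := by
      simp only [Complex.add_re, Complex.natCast_re, Complex.one_re]
      positivity
    have := h1 (ℓ α) hΩ ((n:ℂ)+1) hre
    apply this
    rw [← hQeval n α]
    exact hα
  -- the inequality from disk_bound, scaled
  have hineq : ∀ n : ℕ, ‖((∑ k ∈ range (D+1), c k (ℓ z₁) * ((n:ℂ)+1) ^ k) / ((n:ℂ)+1)^D)‖
      ≤ 3 ^ N * ‖((∑ k ∈ range (D+1), c k (ℓ 0) * ((n:ℂ)+1) ^ k) / ((n:ℂ)+1)^D)‖ := by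
    intro n
    have hd := disk_bound (Q n) N (hQdeg n) ρ z₁ hz₁ρ (hQroots n)
    rw [hQeval n z₁, hQeval n 0] at hd
    have hTne : ((n:ℂ)+1) ≠ 0 := by
      intro h
      have : ((n:ℂ)+1).re = 0 := by rw [h]; simp
      simp only [Complex.add_re, Complex.natCast_re, Complex.one_re] at this
      have h2 : (0:ℝ) ≤ (n:ℝ) := Nat.cast_nonneg n
      linarith
    have hT : 0 < ‖(((n:ℂ)+1) ^ D)‖ :=
      norm_pos_iff.2 (pow_ne_zero _ hTne)
    rw [norm_div, norm_div, ← mul_div_assoc]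
    gcongr
  -- pass to the limit
  have hlim1 : Tendsto (fun n : ℕ =>
      ‖((∑ k ∈ range (D+1), c k (ℓ z₁) * ((n:ℂ)+1) ^ k) / ((n:ℂ)+1)^D)‖)
      atTop (nhds (‖(c D (ℓ z₁))‖)) :=
    (continuous_norm.tendsto _).comp (tendsto_scaled D (fun k => c k (ℓ z₁)))
  have hlim2 : Tendsto (fun n : ℕ =>
      3 ^ N * ‖((∑ k ∈ range (D+1), c k (ℓ 0) * ((n:ℂ)+1) ^ k) / ((n:ℂ)+1)^D)‖)
      atTop (nhds (3 ^ N * ‖(c D (ℓ 0))‖)) :=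
    (((continuous_norm.tendsto _).comp (tendsto_scaled D (fun k => c k (ℓ 0)))).const_mul _)
  have hfinal : ‖(c D (ℓ z₁))‖ ≤ 3 ^ N * ‖(c D (ℓ 0))‖ :=
    le_of_tendsto_of_tendsto' hlim1 hlim2 hineq
  rw [hℓ0, hc0] at hfinal
  simp only [norm_zero, mul_zero] at hfinal
  have : c D (ℓ z₁) ≠ 0 := by
    rw [← hγ D z₁]
    exact hz₁
  have habs : 0 < ‖(c D (ℓ z₁))‖ := norm_pos_iff.2 this
  linarith





/-- Iterated derivative: kill the bottom `j` coefficients. -/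
lemma iter_step (c : ℕ → (V → ℂ) → ℂ) (D : ℕ)
    (hPos : ∀ k, Pos E (c k))
    (h1 : ∀ x : V → ℂ, (∀ v, 0 < (x v).re) → ∀ z : ℂ, 0 < z.re →
      (∑ k ∈ range (D+1), c k x * z ^ k) ≠ 0)
    (htop : c D (fun _ => 1) ≠ 0) :
    ∀ j, j ≤ D → ∀ x : V → ℂ, (∀ v, 0 < (x v).re) → ∀ z : ℂ, 0 < z.re →
      (∑ k ∈ range (D - j + 1), ((k+j).descFactorial j : ℂ) * c (k+j) x * z ^ k) ≠ 0 := by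
  intro j
  induction j with
  | zero =>
    intro _ x hx z hz
    have := h1 x hx z hz
    simpa using this
  | succ j ih =>
    intro hjD x hx z hz
    have hj : j ≤ D := Nat.le_of_succ_le hjD
    set b : ℕ → (V → ℂ) → ℂ := fun k y => (((k+j).descFactorial j : ℕ) : ℂ) * c (k+j) y with hb
    have hbPos : ∀ k, Pos E (b k) := fun k => (hPos (k+j)).natCast_mul _
    have hb1 : ∀ y : V → ℂ, (∀ v, 0 < (y v).re) → ∀ w : ℂ, 0 < w.re →
        (∑ k ∈ range ((D - j) + 1), b k y * w ^ k) ≠ 0 := by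
      intro y hy w hw
      have := ih hj y hy w hw
      simpa [hb] using this
    have hbtop1 : b (D - j) (fun _ => 1) ≠ 0 := by
      rw [hb]
      simp only []
      apply mul_ne_zero
      · have hpos : ((D-j)+j).descFactorial j ≠ 0 := by
          rw [Ne, Nat.descFactorial_eq_zero_iff_lt]
          omega
        exact_mod_cast hpos
      · rw [Nat.sub_add_cancel hj]
        exact htop
    have hbtop := top_coeff b (D - j) hbPos hb1 hbtop1
    have hD1 : 1 ≤ D - j := by omega
    have hgl := gl_step (D - j) hD1 (fun k => b k x)
      (fun w hw => hb1 x hx w hw) (hbtop x hx) z hz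
    have hrange : D - (j+1) + 1 = D - j := by omega
    rw [hrange]
    have hsum : (∑ k ∈ range (D - j), ((k+(j+1)).descFactorial (j+1) : ℂ) * c (k+(j+1)) x * z ^ k)
        = ∑ k ∈ range (D - j), ((k:ℂ)+1) * b (k+1) x * z ^ k := by
      apply Finset.sum_congr rfl
      intro k _
      rw [hb]
      simp only []
      have hco : (k+(j+1)).descFactorial (j+1) = (k+1) * ((k+1+j).descFactorial j) := by
        have h := Nat.descFactorial_succ (k+j+1) j
        have e1 : k+(j+1) = k+j+1 := by omega
        have e2 : k+j+1-j = k+1 := by omega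
        have e4 : k+j+1 = k+1+j := by omega
        rw [e1, h, e2, e4]
      have e3 : k+(j+1) = k+1+j := by omega
      rw [e3] at hco ⊢
      rw [hco]
      push_cast
      ring
    rw [hsum]
    exact hgl

/-- The window-extraction step. -/
theorem window_step (c : ℕ → (V → ℂ) → ℂ) (D f g : ℕ) (hg : g = f ∨ g = f + 1)
    (hPos : ∀ k, Pos E (c k))
    (h1 : ∀ x : V → ℂ, (∀ v, 0 < (x v).re) → ∀ z : ℂ, 0 < z.re →
      (∑ k ∈ range (D+1), c k x * z ^ k) ≠ 0)
    (hanchor : (∑ k ∈ (range (D+1)).filter (fun k => f ≤ k ∧ k ≤ g), c k (fun _ => 1)) ≠ 0) :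
    ∀ x : V → ℂ, (∀ v, 0 < (x v).re) → ∀ z : ℂ, 0 < z.re →
      (∑ k ∈ (range (D+1)).filter (fun k => f ≤ k ∧ k ≤ g), c k x * z ^ k) ≠ 0 := by
  classical
  -- the effective degree
  set S : Finset ℕ := (range (D+1)).filter (fun k => c k (fun _ => 1) ≠ 0) with hS
  have hSne : S.Nonempty := by
    by_contra hemp
    rw [Finset.not_nonempty_iff_eq_empty] at hemp
    apply hanchor
    apply Finset.sum_eq_zero
    intro k hk
    have hk1 : k ∈ range (D+1) := Finset.mem_of_mem_filter k hk
    by_contra hne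
    have : k ∈ S := by
      rw [hS, Finset.mem_filter]
      exact ⟨hk1, hne⟩
    rw [hemp] at this
    exact absurd this (Finset.notMem_empty k)
  set Ds : ℕ := S.max' hSne with hDs
  have hDsS : Ds ∈ S := Finset.max'_mem S hSne
  have hDsD : Ds ≤ D := by
    have := Finset.mem_of_mem_filter Ds hDsS
    exact Nat.lt_succ_iff.1 (mem_range.1 this)
  have hDs1 : c Ds (fun _ => 1) ≠ 0 := (Finset.mem_filter.1 hDsS).2
  have hvan : ∀ k, k ≤ D → Ds < k → ∀ x, c k x = 0 := by
    intro k hkD hk x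
    apply (hPos k).zero_of_one
    by_contra hne
    have hmem : k ∈ S := by
      rw [hS, Finset.mem_filter, mem_range]
      exact ⟨Nat.lt_succ_of_le hkD, hne⟩
    have := Finset.le_max' S k hmem
    omega
  -- truncated non-vanishing hypothesis
  have h1' : ∀ x : V → ℂ, (∀ v, 0 < (x v).re) → ∀ z : ℂ, 0 < z.re →
      (∑ k ∈ range (Ds+1), c k x * z ^ k) ≠ 0 := by
    intro x hx z hz
    have heq : (∑ k ∈ range (D+1), c k x * z ^ k) = ∑ k ∈ range (Ds+1), c k x * z ^ k := by
      rw [eq_comm]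
      apply Finset.sum_subset
      · apply Finset.range_subset_range.2
        omega
      · intro k hk hnk
        rw [mem_range] at hk hnk
        rw [hvan k (by omega) (by omega) x, zero_mul]
    rw [← heq]
    exact h1 x hx z hz
  -- extraction of a single coefficient
  have hsingle : ∀ jj, jj ≤ Ds → c jj (fun _ => 1) ≠ 0 →
      ∀ x : V → ℂ, (∀ v, 0 < (x v).re) → c jj x ≠ 0 := by
    intro jj hjj hjj1
    have hit := iter_step c Ds hPos h1' hDs1 jj hjj
    set M : ℕ := Ds - jj with hM
    set B : ℕ → (V → ℂ) → ℂ :=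
      fun k y => ((((M-k)+jj).descFactorial jj : ℕ) : ℂ) * c ((M-k)+jj) y with hB
    have hB1 : ∀ y : V → ℂ, (∀ v, 0 < (y v).re) → ∀ w : ℂ, 0 < w.re →
        (∑ k ∈ range (M+1), B k y * w ^ k) ≠ 0 := by
      intro y hy w hw
      have := rev_step M (fun k => (((k+jj).descFactorial jj : ℕ) : ℂ) * c (k+jj) y)
        (fun w hw => hit y hy w hw) w hw
      simpa [hB] using this
    have hBpos : ∀ k, Pos E (B k) := fun k => (hPos ((M-k)+jj)).natCast_mul _
    have hBtop1 : B M (fun _ => 1) ≠ 0 := by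
      rw [hB]
      simp only [Nat.sub_self, Nat.zero_add]
      apply mul_ne_zero
      · have hpos : (jj.descFactorial jj) ≠ 0 := by
          rw [Ne, Nat.descFactorial_eq_zero_iff_lt]
          omega
        exact_mod_cast hpos
      · exact hjj1
    have htc := top_coeff B M hBpos hB1 hBtop1
    intro x hx hc
    apply htc x hx
    rw [hB]
    simp only [Nat.sub_self, Nat.zero_add]
    rw [hc, mul_zero]
  -- the anchor supplies an admissible index
  obtain ⟨k0, hk0mem, hk0⟩ := Finset.exists_ne_zero_of_sum_ne_zero hanchor
  rw [Finset.mem_filter, mem_range] at hk0mem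
  have hk0D := hk0mem.1
  have hk0f := hk0mem.2.1
  have hk0Ds : k0 ≤ Ds := by
    apply Finset.le_max' S k0
    rw [hS, Finset.mem_filter, mem_range]
    exact ⟨hk0D, hk0⟩
  have hfDs : f ≤ Ds := le_trans hk0f hk0Ds
  have hfD : f ≤ D := le_trans hfDs hDsD
  intro x hx z hz
  have hzne : z ≠ 0 := by
    intro h
    rw [h] at hz
    simp at hz
  rcases hg with hgf | hgf1
  · -- g = f
    have hfilter : (range (D+1)).filter (fun k => f ≤ k ∧ k ≤ g) = {f} := by
      ext k
      simp only [Finset.mem_filter, mem_range, Finset.mem_singleton]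
      omega
    rw [hfilter] at hanchor ⊢
    rw [Finset.sum_singleton] at hanchor ⊢
    exact mul_ne_zero (hsingle f hfDs hanchor x hx) (pow_ne_zero _ hzne)
  · -- g = f + 1
    by_cases hfD1 : f + 1 ≤ D
    · have hfilter : (range (D+1)).filter (fun k => f ≤ k ∧ k ≤ g) = {f, f+1} := by
        ext k
        simp only [Finset.mem_filter, mem_range, Finset.mem_insert, Finset.mem_singleton]
        omega
      have hpair : ∀ (y : V → ℂ) (w : ℂ),
          (∑ k ∈ ({f, f+1} : Finset ℕ), c k y * w ^ k) = c f y * w ^ f + c (f+1) y * w ^ (f+1) :=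
        fun y w => Finset.sum_pair (by omega)
      rw [hfilter] at hanchor ⊢
      rw [Finset.sum_pair (show f ≠ f+1 by omega)] at hanchor
      rw [hpair]
      by_cases hc1 : c (f+1) (fun _ => 1) = 0
      · have hz1 : ∀ y, c (f+1) y = 0 := (hPos (f+1)).zero_of_one hc1
        have hanc : c f (fun _ => 1) ≠ 0 := by
          rw [hc1, add_zero] at hanchor
          exact hanchor
        rw [hz1 x, zero_mul, add_zero]
        exact mul_ne_zero (hsingle f hfDs hanc x hx) (pow_ne_zero _ hzne)
      · have hf1Ds : f + 1 ≤ Ds := by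
          apply Finset.le_max' S (f+1)
          rw [hS, Finset.mem_filter, mem_range]
          exact ⟨by omega, hc1⟩
        by_cases hc0 : c f (fun _ => 1) = 0
        · have hzf : ∀ y, c f y = 0 := (hPos f).zero_of_one hc0
          rw [hzf x, zero_mul, zero_add]
          exact mul_ne_zero (hsingle (f+1) hf1Ds hc1 x hx) (pow_ne_zero _ hzne)
        · -- the genuine pair case
          set M : ℕ := Ds - f with hM
          have hM1 : 1 ≤ M := by omega
          have hit := iter_step c Ds hPos h1' hDs1 f hfDs
          set B : ℕ → (V → ℂ) → ℂ :=
            fun k y => ((((M-k)+f).descFactorial f : ℕ) : ℂ) * c ((M-k)+f) y with hB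
          have hB1 : ∀ y : V → ℂ, (∀ v, 0 < (y v).re) → ∀ w : ℂ, 0 < w.re →
              (∑ k ∈ range (M+1), B k y * w ^ k) ≠ 0 := by
            intro y hy w hw
            have := rev_step M (fun k => (((k+f).descFactorial f : ℕ) : ℂ) * c (k+f) y)
              (fun w hw => hit y hy w hw) w hw
            simpa [hB] using this
          have hBpos : ∀ k, Pos E (B k) := fun k => (hPos ((M-k)+f)).natCast_mul _
          have hBtop1 : B M (fun _ => 1) ≠ 0 := by
            rw [hB]
            simp only [Nat.sub_self, Nat.zero_add]
            apply mul_ne_zero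
            · have hpos : (f.descFactorial f) ≠ 0 := by
                rw [Ne, Nat.descFactorial_eq_zero_iff_lt]
                omega
              exact_mod_cast hpos
            · exact hc0
          have hit2 := iter_step B M hBpos hB1 hBtop1 (M-1) (by omega)
          have hrange2 : M - (M-1) + 1 = 2 := by omega
          -- specialize to x, then reverse the linear polynomial
          have hlin : ∀ w : ℂ, 0 < w.re →
              ((((1+(M-1)).descFactorial (M-1) : ℕ) : ℂ) * B (1+(M-1)) x
                + (((0+(M-1)).descFactorial (M-1) : ℕ) : ℂ) * B (0+(M-1)) x * w) ≠ 0 := by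
            intro w hw
            have h2 := rev_step 1
              (fun k => (((k+(M-1)).descFactorial (M-1) : ℕ) : ℂ) * B (k+(M-1)) x)
              (fun w hw => by
                have := hit2 x hx w hw
                rw [hrange2] at this
                have h2 : (∑ k ∈ range 2,
                    (((k+(M-1)).descFactorial (M-1) : ℕ) : ℂ) * B (k+(M-1)) x * w ^ k) =
                    ∑ k ∈ range (1+1),
                    (((k+(M-1)).descFactorial (M-1) : ℕ) : ℂ) * B (k+(M-1)) x * w ^ k := rfl
                rw [← h2]
                exact this) w hw
            rw [Finset.sum_range_succ, Finset.sum_range_one] at h2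
            simp only [Nat.sub_self, Nat.sub_zero, pow_zero, mul_one, pow_one] at h2
            -- h2 : u (1-0) + u (1-1) * w ≠ 0, i.e. u 1 * 1 + u 0 * w
            convert h2 using 2 <;> ring_nf
          -- clean up the indices
          set A1 : ℕ := ((0+(M-1)).descFactorial (M-1)) * ((1+f).descFactorial f) with hA1d
          set A2 : ℕ := ((1+(M-1)).descFactorial (M-1)) * (f.descFactorial f) with hA2d
          have hA1 : A1 ≠ 0 := by
            rw [hA1d]
            apply Nat.mul_ne_zero <;>
              (rw [Ne, Nat.descFactorial_eq_zero_iff_lt]; omega)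
          have hA2 : A2 ≠ 0 := by
            rw [hA2d]
            apply Nat.mul_ne_zero <;>
              (rw [Ne, Nat.descFactorial_eq_zero_iff_lt]; omega)
          have hlin' : ∀ w : ℂ, 0 < w.re →
              ((A2:ℂ) * c f x + (A1:ℂ) * c (f+1) x * w) ≠ 0 := by
            intro w hw
            have h3 := hlin w hw
            have e5 : 1+(M-1) = M := by omega
            have e6 : M - M = 0 := by omega
            have e7 : M - (M-1) = 1 := by omega
            rw [e5] at h3
            rw [hB] at h3
            simp only [e6, e7, Nat.zero_add] at h3
            intro hzero
            apply h3
            rw [← hzero, hA1d, hA2d, e5]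
            push_cast
            ring
          -- final contradiction
          intro hcontra
          have hw0 : c f x + c (f+1) x * z = 0 := by
            have hfac : c f x * z ^ f + c (f+1) x * z ^ (f+1) =
                z ^ f * (c f x + c (f+1) x * z) := by
              rw [pow_succ]
              ring
            rw [hfac] at hcontra
            rcases mul_eq_zero.1 hcontra with h | h
            · exact absurd h (pow_ne_zero _ hzne)
            · exact h
          have hr : (0:ℝ) < (A2:ℝ)/(A1:ℝ) := by
            apply div_pos <;>
              (rw [Nat.cast_pos]; omega)
          set w : ℂ := (((A2:ℝ)/(A1:ℝ) : ℝ) : ℂ) * z with hwd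
          have hwre : 0 < w.re := by
            rw [hwd, Complex.re_ofReal_mul]
            exact mul_pos hr hz
          apply hlin' w hwre
          have hA1C : (A1:ℂ) ≠ 0 := Nat.cast_ne_zero.2 hA1
          have key : (A2:ℂ) * c f x + (A1:ℂ) * c (f+1) x * w
              = (A2:ℂ) * (c f x + c (f+1) x * z) := by
            rw [hwd]
            push_cast
            field_simp
          rw [key, hw0, mul_zero]
    · -- f+1 > D : the window degenerates to {f}
      have hfilter : (range (D+1)).filter (fun k => f ≤ k ∧ k ≤ g) = {f} := by
        ext k
        simp only [Finset.mem_filter, mem_range, Finset.mem_singleton]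
        omega
      rw [hfilter] at hanchor ⊢
      rw [Finset.sum_singleton] at hanchor ⊢
      exact mul_ne_zero (hsingle f hfDs hanchor x hx) (pow_ne_zero _ hzne)





section Combinatorics

variable (ε₁ ε₂ : E → V) (deg : Finset E → V → ℕ) (lam : E → ℝ) (f g : V → ℕ)

/-- The partially degree-constrained generating function. -/
noncomputable def ZA (A : Finset V) (x : V → ℂ) : ℂ :=
  ∑ H ∈ univ.filter (fun H : Finset E => ∀ v ∈ A, f v ≤ deg H v ∧ deg H v ≤ g v),
    (∏ e ∈ H, (lam e : ℂ)) * ∏ v, x v ^ deg H v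

lemma prod_x_deg (hdeg : ∀ (H : Finset E) (v : V),
      deg H v = (H.filter fun e => ε₁ e = v).card + (H.filter fun e => ε₂ e = v).card)
    (H : Finset E) (x : V → ℂ) :
    (∏ e ∈ H, x (ε₁ e) * x (ε₂ e)) = ∏ v, x v ^ deg H v := by
  rw [Finset.prod_mul_distrib]
  have h1 : ∏ e ∈ H, x (ε₁ e) = ∏ v, x v ^ (H.filter fun e => ε₁ e = v).card := by
    rw [← Finset.prod_fiberwise_of_maps_to (g := ε₁) (fun e _ => mem_univ (ε₁ e))
      (fun e => x (ε₁ e))]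
    apply Finset.prod_congr rfl
    intro v _
    rw [Finset.prod_congr rfl (fun e he => by rw [(Finset.mem_filter.1 he).2] :
      ∀ e ∈ H.filter fun e => ε₁ e = v, x (ε₁ e) = x v)]
    rw [Finset.prod_const]
  have h2 : ∏ e ∈ H, x (ε₂ e) = ∏ v, x v ^ (H.filter fun e => ε₂ e = v).card := by
    rw [← Finset.prod_fiberwise_of_maps_to (g := ε₂) (fun e _ => mem_univ (ε₂ e))
      (fun e => x (ε₂ e))]
    apply Finset.prod_congr rfl
    intro v _
    rw [Finset.prod_congr rfl (fun e he => by rw [(Finset.mem_filter.1 he).2] :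
      ∀ e ∈ H.filter fun e => ε₂ e = v, x (ε₂ e) = x v)]
    rw [Finset.prod_const]
  rw [h1, h2, ← Finset.prod_mul_distrib]
  apply Finset.prod_congr rfl
  intro v _
  rw [← pow_add, hdeg H v]

lemma base_ne (hlam : ∀ e, 0 ≤ lam e)
    (hdeg : ∀ (H : Finset E) (v : V),
      deg H v = (H.filter fun e => ε₁ e = v).card + (H.filter fun e => ε₂ e = v).card)
    (x : V → ℂ) (hx : ∀ v, 0 < (x v).re) :
    ZA deg lam f g (∅ : Finset V) x ≠ 0 := by
  have hfil : (univ.filter (fun H : Finset E => ∀ v ∈ (∅ : Finset V),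
      f v ≤ deg H v ∧ deg H v ≤ g v)) = univ := by
    apply Finset.filter_true_of_mem
    intro H _
    intro v hv
    exact absurd hv (Finset.notMem_empty v)
  have hZ : ZA deg lam f g (∅ : Finset V) x =
      ∏ e : E, ((lam e : ℂ) * (x (ε₁ e) * x (ε₂ e)) + 1) := by
    rw [ZA, hfil]
    rw [Finset.prod_add]
    rw [Finset.powerset_univ]
    apply Finset.sum_congr rfl
    intro H _
    simp only [Finset.prod_const_one, mul_one]
    rw [Finset.prod_mul_distrib, prod_x_deg ε₁ ε₂ deg hdeg H x]
  rw [hZ]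
  apply Finset.prod_ne_zero_iff.2
  intro e _
  rcases eq_or_lt_of_le (hlam e) with h0 | hpos
  · rw [← h0]
    simp
  intro hzero
  have hz1 : x (ε₁ e) ≠ 0 := by
    intro h
    have := hx (ε₁ e)
    rw [h] at this
    simp at this
  have hlamne : ((lam e : ℂ)) ≠ 0 := by
    simp only [Ne, Complex.ofReal_eq_zero]
    exact ne_of_gt hpos
  have hx2 : x (ε₂ e) = -((lam e : ℂ) * x (ε₁ e))⁻¹ := by
    have hprod : (lam e : ℂ) * x (ε₁ e) ≠ 0 := mul_ne_zero hlamne hz1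
    field_simp at hzero ⊢
    linear_combination hzero
  have hre1 : 0 < ((lam e : ℂ) * x (ε₁ e)).re := by
    rw [Complex.re_ofReal_mul]
    exact mul_pos hpos (hx (ε₁ e))
  have hre2 : 0 < (((lam e : ℂ) * x (ε₁ e))⁻¹).re := by
    rw [Complex.inv_re]
    apply div_pos hre1
    apply Complex.normSq_pos.2
    intro h
    rw [h] at hre1
    simp at hre1
  have := hx (ε₂ e)
  rw [hx2] at this
  simp only [Complex.neg_re] at this
  linarith

lemma split_sum
    (P : Finset E → Prop) [DecidablePred P] (a : V) (x : V → ℂ) (z : ℂ) (t : Finset ℕ)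
    (hmaps : ∀ H, P H → deg H a ∈ t) :
    (∑ H ∈ univ.filter P, (∏ e ∈ H, (lam e : ℂ)) * ∏ v, (Function.update x a z) v ^ deg H v)
    = ∑ k ∈ t, (∑ H ∈ univ.filter (fun H => P H ∧ deg H a = k),
        (∏ e ∈ H, (lam e : ℂ)) * ∏ v ∈ univ.erase a, x v ^ deg H v) * z ^ k := by
  classical
  rw [← Finset.sum_fiberwise_of_maps_to (g := fun H => deg H a)
    (fun H hH => hmaps H (Finset.mem_filter.1 hH).2)
    (fun H => (∏ e ∈ H, (lam e : ℂ)) * ∏ v, (Function.update x a z) v ^ deg H v)]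
  apply Finset.sum_congr rfl
  intro k _
  rw [Finset.filter_filter, Finset.sum_mul]
  apply Finset.sum_congr rfl
  intro H hH
  have hdegk : deg H a = k := (Finset.mem_filter.1 hH).2.2
  have hprod : (∏ v, (Function.update x a z) v ^ deg H v)
      = z ^ k * ∏ v ∈ univ.erase a, x v ^ deg H v := by
    rw [← Finset.mul_prod_erase univ _ (mem_univ a), Function.update_self, hdegk]
    congr 1
    apply Finset.prod_congr rfl
    intro v hv
    rw [Function.update_of_ne (Finset.mem_erase.1 hv).1]
  rw [hprod]
  ring











lemma master (hlam : ∀ e, 0 ≤ lam e)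
    (hdeg : ∀ (H : Finset E) (v : V),
      deg H v = (H.filter fun e => ε₁ e = v).card + (H.filter fun e => ε₂ e = v).card)
    (hfg : ∀ v, f v ≤ g v ∧ g v ≤ f v + 1)
    (hex : ∃ H0 : Finset E, (∀ v, f v ≤ deg H0 v ∧ deg H0 v ≤ g v) ∧ 0 < ∏ e ∈ H0, lam e) :
    ∀ A : Finset V, ∀ x : V → ℂ, (∀ v, 0 < (x v).re) → ZA deg lam f g A x ≠ 0 := by
  intro A
  induction A using Finset.induction_on with
  | empty =>
    intro x hx
    exact base_ne ε₁ ε₂ deg lam f g hlam hdeg x hx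
  | @insert a A ha ih =>
    intro x hx
    set Dd := 2 * Fintype.card E with hDd
    have hdegle : ∀ (H : Finset E) (v : V), deg H v ≤ Dd := by
      intro H v
      rw [hdeg H v, hDd]
      have h1 : (H.filter fun e => ε₁ e = v).card ≤ Fintype.card E := by
        apply le_trans (Finset.card_filter_le H _)
        rw [← Finset.card_univ]
        exact Finset.card_le_univ H
      have h2 : (H.filter fun e => ε₂ e = v).card ≤ Fintype.card E := by
        apply le_trans (Finset.card_filter_le H _)
        rw [← Finset.card_univ]
        exact Finset.card_le_univ H
      omega
    set cc : ℕ → (V → ℂ) → ℂ := fun k y => ∑ H ∈ univ.filter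
        (fun H : Finset E => (∀ v ∈ A, f v ≤ deg H v ∧ deg H v ≤ g v) ∧ deg H a = k),
        (∏ e ∈ H, (lam e : ℂ)) * ∏ v ∈ univ.erase a, y v ^ deg H v with hcc
    have hPos : ∀ k, Pos E (cc k) := by
      intro k
      classical
      refine ⟨fun H => if (∀ v ∈ A, f v ≤ deg H v ∧ deg H v ≤ g v) ∧ deg H a = k
          then ∏ e ∈ H, lam e else 0,
        fun H v => if v = a then 0 else deg H v, ?_, ?_⟩
      · intro H
        simp only []
        split
        · exact Finset.prod_nonneg fun e _ => hlam e
        · exact le_refl 0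
      · intro y
        rw [hcc]
        simp only []
        rw [Finset.sum_filter]
        apply Finset.sum_congr rfl
        intro H _
        split_ifs with h
        · congr 1
          · rw [Complex.ofReal_prod]
          · rw [← Finset.mul_prod_erase univ _ (mem_univ a), if_pos rfl, pow_zero, one_mul]
            apply Finset.prod_congr rfl
            intro v hv
            rw [if_neg (Finset.mem_erase.1 hv).1]
        · simp
    have hI1 : ∀ (y : V → ℂ) (z : ℂ), ZA deg lam f g A (Function.update y a z)
        = ∑ k ∈ range (Dd+1), cc k y * z ^ k := by
      intro y z
      rw [ZA]
      rw [split_sum deg lam (fun H : Finset E => ∀ v ∈ A, f v ≤ deg H v ∧ deg H v ≤ g v)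
        a y z (range (Dd+1)) (fun H _ => mem_range.2 (Nat.lt_succ_of_le (hdegle H a)))]
    have hwindow : ∀ (y : V → ℂ), ZA deg lam f g (insert a A) y
        = ∑ k ∈ (range (Dd+1)).filter (fun k => f a ≤ k ∧ k ≤ g a), cc k y * (y a) ^ k := by
      intro y
      have hup : Function.update y a (y a) = y := Function.update_eq_self a y
      have hmaps : ∀ H : Finset E, (∀ v ∈ insert a A, f v ≤ deg H v ∧ deg H v ≤ g v) →
          deg H a ∈ (range (Dd+1)).filter (fun k => f a ≤ k ∧ k ≤ g a) := by
        intro H hH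
        rw [Finset.mem_filter, mem_range]
        exact ⟨Nat.lt_succ_of_le (hdegle H a), hH a (Finset.mem_insert_self a A)⟩
      calc ZA deg lam f g (insert a A) y
          = ∑ H ∈ univ.filter (fun H : Finset E => ∀ v ∈ insert a A,
              f v ≤ deg H v ∧ deg H v ≤ g v),
            (∏ e ∈ H, (lam e : ℂ)) * ∏ v, (Function.update y a (y a)) v ^ deg H v := by
            rw [hup, ZA]
        _ = ∑ k ∈ (range (Dd+1)).filter (fun k => f a ≤ k ∧ k ≤ g a),
            (∑ H ∈ univ.filter (fun H : Finset E => (∀ v ∈ insert a A,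
                f v ≤ deg H v ∧ deg H v ≤ g v) ∧ deg H a = k),
              (∏ e ∈ H, (lam e : ℂ)) * ∏ v ∈ univ.erase a, y v ^ deg H v) * (y a) ^ k :=
            split_sum deg lam _ a y (y a) _ hmaps
        _ = ∑ k ∈ (range (Dd+1)).filter (fun k => f a ≤ k ∧ k ≤ g a), cc k y * (y a) ^ k := by
            apply Finset.sum_congr rfl
            intro k hk
            rw [Finset.mem_filter] at hk
            have hkf := hk.2.1
            have hkg := hk.2.2
            congr 1
            rw [hcc]
            simp only []
            apply Finset.sum_congr ?_ (fun H _ => rfl)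
            apply Finset.filter_congr
            intro H _
            constructor
            · rintro ⟨hall, hdk⟩
              exact ⟨fun v hv => hall v (Finset.mem_insert_of_mem hv), hdk⟩
            · rintro ⟨hall, hdk⟩
              refine ⟨?_, hdk⟩
              intro v hv
              rcases Finset.mem_insert.1 hv with rfl | hv'
              · rw [hdk]
                exact ⟨hkf, hkg⟩
              · exact hall v hv'
    have h1 : ∀ y : V → ℂ, (∀ v, 0 < (y v).re) → ∀ z : ℂ, 0 < z.re →
        (∑ k ∈ range (Dd+1), cc k y * z ^ k) ≠ 0 := by
      intro y hy z hz
      rw [← hI1 y z]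
      apply ih
      intro v
      by_cases hva : v = a
      · rw [hva, Function.update_self]
        exact hz
      · rw [Function.update_of_ne hva]
        exact hy v
    have hanchor : (∑ k ∈ (range (Dd+1)).filter (fun k => f a ≤ k ∧ k ≤ g a),
        cc k (fun _ => 1)) ≠ 0 := by
      have hone := hwindow (fun _ => 1)
      simp only [one_pow, mul_one] at hone
      rw [← hone]
      -- the all-ones value is a positive real
      obtain ⟨H0, hH0adm, hH0pos⟩ := hex
      have hH0mem : H0 ∈ univ.filter (fun H : Finset E => ∀ v ∈ insert a A,
          f v ≤ deg H v ∧ deg H v ≤ g v) := by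
        rw [Finset.mem_filter]
        exact ⟨mem_univ H0, fun v _ => hH0adm v⟩
      have hval : ZA deg lam f g (insert a A) (fun _ => 1)
          = ((∑ H ∈ univ.filter (fun H : Finset E => ∀ v ∈ insert a A,
              f v ≤ deg H v ∧ deg H v ≤ g v), ∏ e ∈ H, lam e : ℝ) : ℂ) := by
        rw [ZA]
        push_cast
        apply Finset.sum_congr rfl
        intro H _
        simp
      rw [hval]
      rw [Ne, Complex.ofReal_eq_zero]
      apply ne_of_gt
      apply lt_of_lt_of_le hH0pos
      apply Finset.single_le_sum (f := fun H => ∏ e ∈ H, lam e)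
        (fun H _ => Finset.prod_nonneg fun e _ => hlam e) hH0mem
    have hfinal := window_step cc Dd (f a) (g a)
      (by rcases hfg a with ⟨hab, hbc⟩; omega) hPos h1 hanchor x hx (x a) (hx a)
    rw [hwindow x]
    exact hfinal

end Combinatorics


end WagnerAux

open Real

/-- Example 4.2 (Wagner): spanning subgraphs with degree at each vertex `v`
constrained to lie in `[f v, g v]` with `g v ≤ f v + 1`. -/
theorem degree_constrained_nonvanishing
    {V E : Type*} [Fintype V] [DecidableEq V] [Fintype E] [DecidableEq E]
    (ε₁ ε₂ : E → V)
    (deg : Finset E → V → ℕ)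
    (hdeg : ∀ (H : Finset E) (v : V),
      deg H v = (H.filter fun e => ε₁ e = v).card + (H.filter fun e => ε₂ e = v).card)
    (lam : E → ℝ) (hlam : ∀ e, 0 ≤ lam e)
    (f g : V → ℕ) (hfg : ∀ v, f v ≤ g v ∧ g v ≤ f v + 1)
    (Z : (V → ℂ) → ℂ)
    (hZ : ∀ x : V → ℂ, Z x =
      ∑ H ∈ Finset.univ.filter
        (fun H : Finset E => ∀ v, f v ≤ deg H v ∧ deg H v ≤ g v),
        (∏ e ∈ H, (lam e : ℂ)) * ∏ v : V, x v ^ deg H v) :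
    (∀ x : V → ℂ, Z x = 0) ∨
      (∀ x : V → ℂ, (∀ v, x v ≠ 0 ∧ |(x v).arg| < π / 2) → Z x ≠ 0) := by
  classical
  by_cases hex : ∃ H0 : Finset E, (∀ v, f v ≤ deg H0 v ∧ deg H0 v ≤ g v) ∧
      0 < ∏ e ∈ H0, lam e
  · right
    intro x hx
    have hx' : ∀ v, 0 < (x v).re := by
      intro v
      rcases hx v with ⟨hne, harg⟩
      rcases Complex.abs_arg_lt_pi_div_two_iff.1 harg with h | h
      · exact h
      · exact absurd h hne
    have hZA := WagnerAux.master ε₁ ε₂ deg lam f g hlam hdeg hfg hex Finset.univ x hx'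
    rw [hZ x]
    rw [WagnerAux.ZA] at hZA
    have hfil : (Finset.univ.filter (fun H : Finset E => ∀ v, f v ≤ deg H v ∧ deg H v ≤ g v))
        = Finset.univ.filter (fun H : Finset E => ∀ v ∈ Finset.univ,
            f v ≤ deg H v ∧ deg H v ≤ g v) := by
      apply Finset.filter_congr
      intro H _
      simp
    rw [hfil]
    exact hZA
  · left
    intro x
    rw [hZ x]
    apply Finset.sum_eq_zero
    intro H hH
    have hadm := (Finset.mem_filter.1 hH).2
    have hnot : ¬ 0 < ∏ e ∈ H, lam e := fun hpos => hex ⟨H, hadm, hpos⟩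
    have h0 : ∏ e ∈ H, lam e = 0 :=
      le_antisymm (not_lt.1 hnot) (Finset.prod_nonneg fun e _ => hlam e)
    have hc : (∏ e ∈ H, (lam e : ℂ)) = 0 := by
      rw [← Complex.ofReal_prod, h0, Complex.ofReal_zero]
    rw [hc, zero_mul]
end

section
/- Let F(y) = Σ_j N_j y^j be a polynomial with nonnegative real coefficients all of whose complex zeros z satisfy |arg z| ≥ 2π/3 (equivalently, F has no zeros in the open sector {z ≠ 0 : |arg z| < 2π/3}). Then the coefficient sequence (N_j) is logarithmically concave with no internal zeros: N_j² ≥ N_{j+1} N_{j−1} for all j, and if N_i ≠ 0 and N_k ≠ 0 with i ≤ j ≤ k then N_j ≠ 0. -/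
open Real Polynomial

/-- Integer-indexed coefficient sequence of a real polynomial. -/
noncomputable def E (P : ℝ[X]) (n : ℤ) : ℝ := if 0 ≤ n then P.coeff n.toNat else 0


/-- Nonnegative, log-concave, no-internal-zeros (integer-indexed). -/
def GZ (f : ℤ → ℝ) : Prop :=
  (∀ j, 0 ≤ f j) ∧ (∀ j, f j * f (j+2) ≤ f (j+1)^2) ∧
    (∀ i j k : ℤ, i ≤ j → j ≤ k → f i ≠ 0 → f k ≠ 0 → f j ≠ 0)

lemma GZ.skew {f : ℤ → ℝ} (hf : GZ f) : ∀ (d : ℕ) (i : ℤ),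
    f (i-1) * f (i+d+1) ≤ f i * f (i+d) := by
  obtain ⟨h0, h1, h2⟩ := hf
  intro d
  induction d with
  | zero =>
    intro i
    have := h1 (i-1)
    rw [show i-1+2 = i+1 by ring, show i-1+1 = i by ring] at this
    simpa [sq] using this
  | succ d IH =>
    intro i
    rw [show ((d+1:ℕ):ℤ) = (d:ℤ)+1 by push_cast; ring,
      show i+((d:ℤ)+1)+1 = i+d+2 by ring, show i+((d:ℤ)+1) = i+d+1 by ring]
    by_cases ha : f (i-1) = 0
    · rw [ha, zero_mul]; exact mul_nonneg (h0 _) (h0 _)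
    by_cases hs : f (i+d+2) = 0
    · rw [hs, mul_zero]; exact mul_nonneg (h0 _) (h0 _)
    have hq : f (i+d) ≠ 0 := h2 (i-1) (i+d) (i+d+2) (by omega) (by omega) ha hs
    have hr : f (i+d+1) ≠ 0 := h2 (i-1) (i+d+1) (i+d+2) (by omega) (by omega) ha hs
    have hq' : 0 < f (i+d) := lt_of_le_of_ne (h0 _) (Ne.symm hq)
    have hr' : 0 < f (i+d+1) := lt_of_le_of_ne (h0 _) (Ne.symm hr)
    have hIH := IH i
    have hLC := h1 (i+d)
    rw [show i+(d:ℤ)+2 = i+d+1+1 by ring] at hs ⊢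
    have key : (f (i-1) * f (i+d+1+1)) * (f (i+d) * f (i+d+1)) ≤
        (f i * f (i+d+1)) * (f (i+d) * f (i+d+1)) := by
      have h3 := mul_le_mul hIH hLC (mul_nonneg (h0 _) (h0 _))
        (mul_nonneg (h0 _) (h0 _))
      rw [show i+(d:ℤ)+2 = i+d+1+1 by ring] at h3
      nlinarith [h3]
    exact le_of_mul_le_mul_right key (mul_pos hq' hr')


lemma GZ.skew' {f : ℤ → ℝ} (hf : GZ f) {i j : ℤ} (h : i ≤ j) :
    f (i-1) * f (j+1) ≤ f i * f j := by
  obtain ⟨d, rfl⟩ : ∃ d : ℕ, j = i + d := ⟨(j-i).toNat, by omega⟩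
  exact hf.skew d i


lemma GZ.conv {f : ℤ → ℝ} (hf : GZ f) {α β γ : ℝ} (hα : 0 ≤ α) (hβ : 0 ≤ β)
    (hγ : 0 ≤ γ) (h : α * γ ≤ β ^ 2) :
    GZ (fun n => γ * f (n-2) + β * f (n-1) + α * f n) := by
  obtain ⟨h0, h1, h2⟩ := hf
  refine ⟨?_, ?_, ?_⟩
  · intro j
    have := h0 (j-2); have := h0 (j-1); have := h0 j
    positivity
  · intro j
    simp only
    rw [show j+1-2 = j-1 by ring, show j+1-1 = j by ring,
      show j+2-2 = j by ring, show j+2-1 = j+1 by ring]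
    have s1 : f (j-2) * f j ≤ f (j-1) * f (j-1) := by
      have := GZ.skew' ⟨h0,h1,h2⟩ (le_refl (j-1))
      rw [show j-1-1 = j-2 by ring, show j-1+1 = j by ring] at this; linarith
    have s2 : f (j-2) * f (j+1) ≤ f (j-1) * f j := by
      have := GZ.skew' ⟨h0,h1,h2⟩ (show j-1 ≤ j by omega)
      rw [show j-1-1 = j-2 by ring] at this; linarith
    have s3 : f (j-2) * f (j+2) ≤ f (j-1) * f (j+1) := by
      have := GZ.skew' ⟨h0,h1,h2⟩ (show j-1 ≤ j+1 by omega)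
      rw [show j-1-1 = j-2 by ring, show j+1+1 = j+2 by ring] at this; linarith
    have s4 : f (j-1) * f (j+1) ≤ f j * f j := by
      have := GZ.skew' ⟨h0,h1,h2⟩ (le_refl j); linarith
    have s5 : f (j-1) * f (j+2) ≤ f j * f (j+1) := by
      have := GZ.skew' ⟨h0,h1,h2⟩ (show j ≤ j+1 by omega)
      rw [show j+1+1 = j+2 by ring] at this; linarith
    have s6 : f j * f (j+2) ≤ f (j+1) * f (j+1) := by
      have := GZ.skew' ⟨h0,h1,h2⟩ (le_refl (j+1))
      rw [show j+1-1 = j by ring, show j+1+1 = j+2 by ring] at this; linarith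
    nlinarith [mul_nonneg (mul_nonneg hγ hγ) (sub_nonneg.2 s1),
      mul_nonneg (mul_nonneg hγ hβ) (sub_nonneg.2 s2),
      mul_nonneg (mul_nonneg hγ hα) (sub_nonneg.2 s3),
      mul_nonneg (sub_nonneg.2 h) (sub_nonneg.2 s4),
      mul_nonneg (mul_nonneg hα hβ) (sub_nonneg.2 s5),
      mul_nonneg (mul_nonneg hα hα) (sub_nonneg.2 s6)]
  · intro i j k hij hjk hi hk
    simp only at hi hk ⊢
    intro hgj
    have hnn : ∀ m, 0 ≤ γ * f (m-2) + β * f (m-1) := fun m =>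
      add_nonneg (mul_nonneg hγ (h0 _)) (mul_nonneg hβ (h0 _))
    have t2 : γ * f (j-2) = 0 := by
      have := mul_nonneg hγ (h0 (j-2)); have := mul_nonneg hβ (h0 (j-1))
      have := mul_nonneg hα (h0 j); linarith
    have t1 : β * f (j-1) = 0 := by
      have := mul_nonneg hγ (h0 (j-2)); have := mul_nonneg hβ (h0 (j-1))
      have := mul_nonneg hα (h0 j); linarith
    have t0 : α * f j = 0 := by
      have := mul_nonneg hγ (h0 (j-2)); have := mul_nonneg hβ (h0 (j-1))
      have := mul_nonneg hα (h0 j); linarith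
    have wi : γ * f (i-2) ≠ 0 ∨ β * f (i-1) ≠ 0 ∨ α * f i ≠ 0 := by
      by_contra hc; push_neg at hc; exact hi (by rw [hc.1, hc.2.1, hc.2.2]; ring)
    have wk : γ * f (k-2) ≠ 0 ∨ β * f (k-1) ≠ 0 ∨ α * f k ≠ 0 := by
      by_contra hc; push_neg at hc; exact hk (by rw [hc.1, hc.2.1, hc.2.2]; ring)
    -- helper: zeros at j
    rcases wi with hwi | hwi | hwi <;> rcases wk with hwk | hwk | hwk <;>
      [skip; skip; skip; skip; skip; skip; skip; skip; skip]
    -- case (2,2)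
    · have z2 : f (j-2) = 0 := (mul_eq_zero.1 t2).resolve_left (left_ne_zero_of_mul hwi)
      exact h2 (i-2) (j-2) (k-2) (by omega) (by omega)
        (right_ne_zero_of_mul hwi) (right_ne_zero_of_mul hwk) z2
    -- case (2,1): oi=2 ≥ ok=1
    · have z2 : f (j-2) = 0 := (mul_eq_zero.1 t2).resolve_left (left_ne_zero_of_mul hwi)
      exact h2 (i-2) (j-2) (k-1) (by omega) (by omega)
        (right_ne_zero_of_mul hwi) (right_ne_zero_of_mul hwk) z2
    -- case (2,0)
    · have z2 : f (j-2) = 0 := (mul_eq_zero.1 t2).resolve_left (left_ne_zero_of_mul hwi)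
      exact h2 (i-2) (j-2) k (by omega) (by omega)
        (right_ne_zero_of_mul hwi) (right_ne_zero_of_mul hwk) z2
    -- case (1,2): oi=1 < ok=2
    · have z1 : f (j-1) = 0 := (mul_eq_zero.1 t1).resolve_left (left_ne_zero_of_mul hwi)
      have z2 : f (j-2) = 0 := (mul_eq_zero.1 t2).resolve_left (left_ne_zero_of_mul hwk)
      by_cases hple : i - 1 ≤ j - 2
      · exact h2 (i-1) (j-2) (k-2) hple (by omega) (right_ne_zero_of_mul hwi)
          (right_ne_zero_of_mul hwk) z2
      · have : i - 1 = j - 1 := by omega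
        rw [this] at hwi; exact right_ne_zero_of_mul hwi z1
    -- case (1,1)
    · have z1 : f (j-1) = 0 := (mul_eq_zero.1 t1).resolve_left (left_ne_zero_of_mul hwi)
      exact h2 (i-1) (j-1) (k-1) (by omega) (by omega)
        (right_ne_zero_of_mul hwi) (right_ne_zero_of_mul hwk) z1
    -- case (1,0)
    · have z1 : f (j-1) = 0 := (mul_eq_zero.1 t1).resolve_left (left_ne_zero_of_mul hwi)
      exact h2 (i-1) (j-1) k (by omega) (by omega)
        (right_ne_zero_of_mul hwi) (right_ne_zero_of_mul hwk) z1
    -- case (0,2): oi=0 < ok=2, need β ≠ 0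
    · have hα0 : α ≠ 0 := left_ne_zero_of_mul hwi
      have hγ0 : γ ≠ 0 := left_ne_zero_of_mul hwk
      have hβ0 : β ≠ 0 := by
        intro hb
        rw [hb] at h
        nlinarith [lt_of_le_of_ne hα (Ne.symm hα0), lt_of_le_of_ne hγ (Ne.symm hγ0)]
      have z0 : f j = 0 := (mul_eq_zero.1 t0).resolve_left hα0
      have z1 : f (j-1) = 0 := (mul_eq_zero.1 t1).resolve_left hβ0
      have z2 : f (j-2) = 0 := (mul_eq_zero.1 t2).resolve_left hγ0
      by_cases hple : i ≤ j - 2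
      · exact h2 i (j-2) (k-2) hple (by omega) (right_ne_zero_of_mul hwi)
          (right_ne_zero_of_mul hwk) z2
      · have : i = j - 1 ∨ i = j := by omega
        rcases this with h'|h'
        · rw [h'] at hwi; exact right_ne_zero_of_mul hwi z1
        · rw [h'] at hwi; exact right_ne_zero_of_mul hwi z0
    -- case (0,1): oi=0 < ok=1
    · have z0 : f j = 0 := (mul_eq_zero.1 t0).resolve_left (left_ne_zero_of_mul hwi)
      have z1 : f (j-1) = 0 := (mul_eq_zero.1 t1).resolve_left (left_ne_zero_of_mul hwk)
      by_cases hple : i ≤ j - 1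
      · exact h2 i (j-1) (k-1) hple (by omega) (right_ne_zero_of_mul hwi)
          (right_ne_zero_of_mul hwk) z1
      · have : i = j := by omega
        rw [this] at hwi; exact right_ne_zero_of_mul hwi z0
    -- case (0,0)
    · have z0 : f j = 0 := (mul_eq_zero.1 t0).resolve_left (left_ne_zero_of_mul hwi)
      exact h2 i j k hij hjk (right_ne_zero_of_mul hwi) (right_ne_zero_of_mul hwk) z0

lemma E_mul_linear (a : ℝ) (Q : ℝ[X]) (n : ℤ) :
    E ((X + C a) * Q) n = E Q (n-1) + a * E Q n := by
  rcases lt_trichotomy n 0 with hn | hn | hn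
  · simp [E, not_le.2 hn, not_le.2 (by omega : n - 1 < 0)]
    intro h; omega
  · subst hn
    simp [E, mul_coeff_zero, show (-1:ℤ) < 0 by norm_num]
  · obtain ⟨m, rfl⟩ : ∃ m : ℕ, n = (m:ℤ) + 1 := ⟨(n-1).toNat, by omega⟩
    have h1 : ((m:ℤ)+1).toNat = m + 1 := by omega
    have h2 : ((m:ℤ)+1-1).toNat = m := by omega
    simp only [E, if_pos (by omega : (0:ℤ) ≤ (m:ℤ)+1), if_pos (by omega : (0:ℤ) ≤ (m:ℤ)+1-1),
      h1, h2]
    rw [add_mul, coeff_add, coeff_X_mul, coeff_C_mul]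



lemma E_mul_quadratic (b c : ℝ) (Q : ℝ[X]) (n : ℤ) :
    E ((X^2 + C b * X + C c) * Q) n = E Q (n-2) + b * E Q (n-1) + c * E Q n := by
  have expand : (X^2 + C b * X + C c) * Q = X * (X * Q) + C b * (X * Q) + C c * Q := by ring
  rcases lt_trichotomy n 0 with hn | hn | hn
  · simp [E, not_le.2 hn, not_le.2 (by omega : n - 1 < 0), not_le.2 (by omega : n - 2 < 0)]
    have h2' : ¬ (2:ℤ) ≤ n := by omega
    have h1' : ¬ (1:ℤ) ≤ n := by omega
    simp [h1', h2']
  · subst hn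
    simp [E, expand, mul_coeff_zero, show (-1:ℤ) < 0 by norm_num, show (-2:ℤ) < 0 by norm_num]
  · rcases eq_or_lt_of_le (by omega : (1:ℤ) ≤ n) with hn1 | hn1
    · obtain rfl : n = 1 := hn1.symm
      have e1 : (X * (X * Q)).coeff 1 = (X*Q).coeff 0 := by
        rw [show (1:ℕ) = 0 + 1 from rfl, coeff_X_mul]
      have e2 : (X * Q).coeff 1 = Q.coeff 0 := by
        rw [show (1:ℕ) = 0 + 1 from rfl, coeff_X_mul]
      simp only [E, expand, show ((1:ℤ)).toNat = 1 from rfl, show ((1:ℤ)-1) = 0 from rfl,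
        show ((1:ℤ)-2) = -1 from rfl, if_pos (by norm_num : (0:ℤ) ≤ 1),
        if_pos (le_refl (0:ℤ)), if_neg (by norm_num : ¬(0:ℤ) ≤ -1),
        show ((0:ℤ)).toNat = 0 from rfl, coeff_add, coeff_C_mul, e1, e2, mul_coeff_zero,
        coeff_X_zero, zero_mul]
    · obtain ⟨m, rfl⟩ : ∃ m : ℕ, n = (m:ℤ) + 2 := ⟨(n-2).toNat, by omega⟩
      have h1 : ((m:ℤ)+2).toNat = m + 2 := by omega
      have h2 : ((m:ℤ)+2-1).toNat = m + 1 := by omega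
      have h3 : ((m:ℤ)+2-2).toNat = m := by omega
      simp only [E, if_pos (by omega : (0:ℤ) ≤ (m:ℤ)+2), if_pos (by omega : (0:ℤ) ≤ (m:ℤ)+2-1),
        if_pos (by omega : (0:ℤ) ≤ (m:ℤ)+2-2), h1, h2, h3, expand]
      rw [coeff_add, coeff_add, coeff_C_mul, coeff_C_mul,
        show m+2 = (m+1)+1 from rfl, coeff_X_mul, coeff_X_mul, coeff_X_mul]


lemma key : ∀ (n : ℕ) (P : ℝ[X]), P.natDegree = n → P.Monic →
    (∀ z : ℂ, (aeval z) P = 0 → z = 0 ∨ 2 * π / 3 ≤ |z.arg|) → GZ (E P) := by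
  intro n
  induction n using Nat.strong_induction_on with
  | _ n IH =>
  intro P hdeg hmon hroot
  rcases Nat.eq_zero_or_pos n with hn0 | hn1
  · subst hn0
    have hP1 : P = 1 := hmon.natDegree_eq_zero.mp hdeg
    subst hP1
    have hE : ∀ m : ℤ, E (1:ℝ[X]) m = if m = 0 then 1 else 0 := by
      intro m
      simp only [E, coeff_one]
      split_ifs with h1 h2 h3 <;> first | rfl | (exfalso; omega)
    refine ⟨fun j => ?_, fun j => ?_, fun i j k hij hjk hi hk => ?_⟩
    · rw [hE]; split_ifs <;> norm_num
    · rw [hE, hE, hE]; split_ifs <;> first | omega | norm_num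
    · have hi0 : i = 0 := by
        by_contra h; rw [hE, if_neg h] at hi; exact hi rfl
      have hk0 : k = 0 := by
        by_contra h; rw [hE, if_neg h] at hk; exact hk rfl
      have : j = 0 := by omega
      rw [hE, if_pos this]; norm_num
  · -- degree ≥ 1 : find a complex root
    obtain ⟨z, hz⟩ : ∃ z : ℂ, (aeval z) P = 0 := by
      apply IsAlgClosed.exists_aeval_eq_zero ℂ P
      rw [degree_eq_natDegree hmon.ne_zero, hdeg]
      exact_mod_cast (by omega : (n:ℤ) ≠ 0)  -- may need fixing
    by_cases him : z.im = 0
    · -- real root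
      set a := z.re with ha
      have hza : z = (a : ℂ) := Complex.ext rfl (by simp [him])
      have heval : P.eval a = 0 := by
        have : (algebraMap ℝ ℂ) (P.eval a) = 0 := by
          rw [← aeval_algebraMap_apply_eq_algebraMap_eval]
          simpa [← hza] using hz
        rwa [Complex.coe_algebraMap, Complex.ofReal_eq_zero] at this
      have hale : a ≤ 0 := by
        by_contra hpos
        push_neg at hpos
        have hz0 : z ≠ 0 := by
          rw [hza]; exact_mod_cast ne_of_gt hpos
        rcases hroot z hz with h0 | hge
        · exact hz0 h0
        · rw [hza, Complex.arg_ofReal_of_nonneg hpos.le] at hge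
          simp at hge
          nlinarith [Real.pi_pos]
      obtain ⟨Q, hQ⟩ := dvd_iff_isRoot.2 heval
      have hmonQ : Q.Monic := (monic_X_sub_C a).of_mul_monic_left (hQ ▸ hmon)
      have hdegQ : Q.natDegree = n - 1 := by
        have := natDegree_mul (X_sub_C_ne_zero a) hmonQ.ne_zero
        rw [← hQ, natDegree_X_sub_C, hdeg] at this
        omega
      have hrootQ : ∀ w : ℂ, (aeval w) Q = 0 → w = 0 ∨ 2 * π / 3 ≤ |w.arg| := by
        intro w hw
        exact hroot w (by rw [hQ, map_mul, hw, mul_zero])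
      have hGZQ := IH (n-1) (by omega) Q hdegQ hmonQ hrootQ
      have hconv := hGZQ.conv (α := -a) (β := 1) (γ := 0)
        (by linarith) zero_le_one le_rfl (by norm_num)
      have hEP : E P = fun m => 0 * E Q (m-2) + 1 * E Q (m-1) + (-a) * E Q m := by
        funext m
        rw [show P = (X + C (-a)) * Q by rw [hQ, map_neg, sub_eq_add_neg], E_mul_linear]
        ring
      rw [hEP]; exact hconv
    · -- complex root
      have hz0 : z ≠ 0 := fun h => him (by simp [h])
      set b := -(2 * z.re) with hb
      set c := ‖z‖^2 with hc
      have hQdvd : X^2 + C b * X + C c ∣ P := by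
        have := P.quadratic_dvd_of_aeval_eq_zero_im_ne_zero hz him
        have heq : X^2 - C (2*z.re) * X + C (‖z‖^2) = X^2 + C b * X + C c := by
          rw [hb, map_neg]; ring
        rwa [heq] at this
      obtain ⟨Q, hQ⟩ := hQdvd
      have hmq : (X^2 + C b * X + C c).Monic := by
        rw [add_assoc]
        exact monic_X_pow_add (lt_of_le_of_lt degree_linear_le (by norm_num))
      have hdq : (X^2 + C b * X + C c).natDegree = 2 := by
        compute_degree!
      have hmonQ : Q.Monic := hmq.of_mul_monic_left (hQ ▸ hmon)
      have hdegQ : Q.natDegree = n - 2 := by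
        have := natDegree_mul hmq.ne_zero hmonQ.ne_zero
        rw [← hQ, hdq, hdeg] at this
        omega
      -- sector conditions
      rcases hroot z hz with h0 | harg
      · exact absurd h0 hz0
      have habs : 0 < ‖z‖ := norm_pos_iff.mpr hz0
      have hcos : Real.cos z.arg = z.re / ‖z‖ := Complex.cos_arg hz0
      have hargpi : |z.arg| ≤ π := abs_le.2 ⟨(Complex.neg_pi_lt_arg z).le, Complex.arg_le_pi z⟩
      have hcosle : Real.cos z.arg ≤ -(1/2) := by
        have h1 : Real.cos |z.arg| ≤ Real.cos (2 * π / 3) :=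
          Real.cos_le_cos_of_nonneg_of_le_pi (by positivity) hargpi harg
        have h2 : Real.cos (2 * π / 3) = -(1/2) := by
          rw [show 2 * π / 3 = π - π/3 by ring, Real.cos_pi_sub, Real.cos_pi_div_three]
        rwa [Real.cos_abs, h2] at h1
      have hre : z.re ≤ -(‖z‖) / 2 := by
        rw [hcos, div_le_iff₀ habs] at hcosle
        linarith
      have habs2 : (‖z‖)^2 = z.re^2 + z.im^2 := by
        rw [Complex.sq_norm, Complex.normSq_apply]; ring
      have hnorm : ‖z‖ = ‖z‖ := rfl
      have hbpos : 0 ≤ b := by rw [hb]; nlinarith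
      have hcpos : 0 ≤ c := by rw [hc]; positivity
      have hcb : c ≤ b^2 := by
        rw [hb, hc, hnorm]
        nlinarith [hre, habs, habs2]
      have hrootQ : ∀ w : ℂ, (aeval w) Q = 0 → w = 0 ∨ 2 * π / 3 ≤ |w.arg| := by
        intro w hw
        exact hroot w (by rw [hQ, map_mul, hw, mul_zero])
      have hGZQ := IH (n-2) (by omega) Q hdegQ hmonQ hrootQ
      have hconv := hGZQ.conv (α := c) (β := b) (γ := 1)
        hcpos hbpos zero_le_one (by nlinarith)
      have hEP : E P = fun m => 1 * E Q (m-2) + b * E Q (m-1) + c * E Q m := by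
        funext m
        rw [hQ, E_mul_quadratic]
        ring
      rw [hEP]; exact hconv


/-- "Folklore" of Example 4.6: a real polynomial with nonnegative coefficients
that is nonvanishing on the open sector `{z ≠ 0 : |arg z| < 2π/3}` has a
logarithmically concave coefficient sequence with no internal zeros. -/
theorem log_concave_of_sector_nonvanishing
    (P : Polynomial ℝ) (hcoeff : ∀ j, 0 ≤ P.coeff j)
    (hnv : ∀ z : ℂ, z ≠ 0 → |z.arg| < 2 * π / 3 → Polynomial.aeval z P ≠ 0) :
    (∀ j : ℕ, P.coeff j * P.coeff (j + 2) ≤ P.coeff (j + 1) ^ 2) ∧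
      (∀ i j k : ℕ, i ≤ j → j ≤ k → P.coeff i ≠ 0 → P.coeff k ≠ 0 →
        P.coeff j ≠ 0) := by
  by_cases hP0 : P = 0
  · subst hP0
    constructor
    · intro j; simp
    · intro i j k _ _ hi _; simp at hi
  · set lc := P.leadingCoeff with hlc
    have hlcne : lc ≠ 0 := leadingCoeff_ne_zero.2 hP0
    have hlcpos : 0 < lc := lt_of_le_of_ne (hcoeff _) (Ne.symm hlcne)
    set P₁ := P * C lc⁻¹ with hP₁
    have hmon : P₁.Monic := monic_mul_leadingCoeff_inv hP0
    have hco : ∀ m : ℕ, P.coeff m = lc * P₁.coeff m := by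
      intro m
      rw [hP₁, coeff_mul_C]
      field_simp
    have hroot : ∀ z : ℂ, (aeval z) P₁ = 0 → z = 0 ∨ 2 * π / 3 ≤ |z.arg| := by
      intro z hz
      have hPz : (aeval z) P = 0 := by
        rw [hP₁, map_mul, aeval_C] at hz
        rcases mul_eq_zero.1 hz with h | h
        · exact h
        · exfalso
          rw [Complex.coe_algebraMap, Complex.ofReal_eq_zero] at h
          exact inv_ne_zero hlcne h
      by_cases hz0 : z = 0
      · exact Or.inl hz0
      · right
        by_contra hlt
        push_neg at hlt
        exact hnv z hz0 hlt hPz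
    have hGZ : GZ (E P₁) := key P₁.natDegree P₁ rfl hmon hroot
    have hE : ∀ m : ℕ, E P₁ (m : ℤ) = P₁.coeff m := by
      intro m
      simp [E]
    constructor
    · intro j
      have := hGZ.2.1 (j : ℤ)
      rw [show (j:ℤ)+2 = ((j+2:ℕ):ℤ) by push_cast; ring,
        show (j:ℤ)+1 = ((j+1:ℕ):ℤ) by push_cast; ring, hE, hE, hE] at this
      rw [hco j, hco (j+1), hco (j+2)]
      nlinarith [mul_le_mul_of_nonneg_left this (sq_nonneg lc)]
    · intro i j k hij hjk hi hk
      have hi' : E P₁ (i:ℤ) ≠ 0 := by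
        rw [hE]
        intro h
        exact hi (by rw [hco i, h, mul_zero])
      have hk' : E P₁ (k:ℤ) ≠ 0 := by
        rw [hE]
        intro h
        exact hk (by rw [hco k, h, mul_zero])
      have := hGZ.2.2 (i:ℤ) (j:ℤ) (k:ℤ) (by exact_mod_cast hij) (by exact_mod_cast hjk) hi' hk'
      rw [hE] at this
      rw [hco j]
      exact mul_ne_zero hlcne this
end

section
/- Let k ≥ 1, d = 2k, and let u > 0 be a real number with 4u ≥ C(2k,k)². Then every complex zero of K(z) = 1 + C(2k,k) z^k + u z^{2k} has modulus exactly u^{−1/(2k)}. -/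
/-- Example 4.8: if `4u ≥ C(2k,k)²`, every zero of
`1 + C(2k,k) z^k + u z^{2k}` has modulus `u^{-1/(2k)}`. -/
theorem key_zeros_modulus
    (k : ℕ) (hk : 1 ≤ k) (u : ℝ) (hu : 0 < u)
    (h4u : ((2 * k).choose k : ℝ) ^ 2 ≤ 4 * u)
    (z : ℂ)
    (hz : 1 + ((2 * k).choose k : ℂ) * z ^ k + (u : ℂ) * z ^ (2 * k) = 0) :
    ‖z‖ = u ^ (-(1 : ℝ) / (2 * (k : ℝ))) := by
  set c : ℝ := ((2 * k).choose k : ℝ) with hc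
  have hw : (u : ℂ) * (z ^ k) ^ 2 + (c : ℂ) * z ^ k + 1 = 0 := by
    have h2 : z ^ (2 * k) = (z ^ k) ^ 2 := by
      rw [mul_comm, pow_mul]
    rw [← h2]
    push_cast [hc]
    linear_combination hz
  set a : ℝ := (z ^ k).re with ha
  set b : ℝ := (z ^ k).im with hb
  rw [Complex.ext_iff] at hw
  obtain ⟨hre, him⟩ := hw
  simp only [Complex.add_re, Complex.add_im, Complex.mul_re, Complex.mul_im,
    Complex.ofReal_re, Complex.ofReal_im, Complex.one_re, Complex.one_im,
    Complex.zero_re, Complex.zero_im, pow_two, ← ha, ← hb] at hre him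
  -- hre : u * (a*a - b*b) + c*a + 1 = 0 (roughly), him : similar
  have him' : b * (c + 2 * u * a) = 0 := by nlinarith [him]
  have key : u * (a ^ 2 + b ^ 2) = 1 := by
    rcases mul_eq_zero.mp him' with hb0 | hca
    · -- b = 0, real root: discriminant must vanish
      rw [hb0] at hre
      have hsq : (2 * u * a + c) ^ 2 = c ^ 2 - 4 * u := by
        linear_combination 4 * u * hre
      have h1 : (2 * u * a + c) ^ 2 = 0 :=
        le_antisymm (by linarith) (sq_nonneg _)
      rw [hb0]
      nlinarith [hre, h1, hsq, hu]
    · nlinarith [hre]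
  have hns : Complex.normSq (z ^ k) = u⁻¹ := by
    rw [Complex.normSq_apply, ← ha, ← hb]
    field_simp
    nlinarith [key]
  have habs : ‖z‖ ^ (2 * k) = u⁻¹ := by
    have : ‖z‖ ^ (2 * k) = ‖z ^ k‖ ^ 2 := by
      rw [norm_pow, ← pow_mul, mul_comm]
    rw [this, Complex.sq_norm, hns]
  have hk2 : (2 * k : ℕ) ≠ 0 := by omega
  have := congrArg (fun x : ℝ => x ^ ((2 * k : ℕ) : ℝ)⁻¹) habs
  rw [Real.pow_rpow_inv_natCast (norm_nonneg z) hk2] at this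
  rw [this, ← Real.rpow_neg_one u, ← Real.rpow_mul hu.le]
  congr 1
  push_cast
  ring
end

section
/- Let G = (V,E) be a finite graph. Then every complex zero of the polynomial Σ_{H⊆E} y^{#H} / Π_{v∈V} C(deg(G,v), deg(H,v)) has modulus one, where the sum is over all spanning subgraphs H ⊆ E and C(·,·) denotes binomial coefficients. -/
open Polynomial

lemma normSq_helper (a b : ℂ) :
    Complex.normSq (a - b) - Complex.normSq (1 - (starRingEnd ℂ) a * b)
      = (1 - Complex.normSq a) * (Complex.normSq b - 1) := by
  simp [Complex.normSq_apply, Complex.sub_re, Complex.sub_im, Complex.mul_re, Complex.mul_im,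
    Complex.conj_re, Complex.conj_im, Complex.one_re, Complex.one_im]
  ring

lemma list_fin_prod {M : Type*} [CommMonoid M] (l : List M) {n : ℕ} (hlen : l.length = n) :
    l.prod = ∏ i : Fin n, l.get (Fin.cast hlen.symm i) := by
  subst hlen
  conv_lhs => rw [← List.ofFn_get l]
  rw [List.prod_ofFn]
  rfl

lemma exists_fin_roots (p : ℂ[X]) :
    ∃ ρ : Fin p.natDegree → ℂ, (∀ i, p.IsRoot (ρ i)) ∧
      p = C p.leadingCoeff * ∏ i, (X - C (ρ i)) := by
  have hs : p.Splits := IsAlgClosed.splits p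
  have hcard : p.roots.card = p.natDegree := (splits_iff_card_roots).1 hs
  have hlen : p.roots.toList.length = p.natDegree := by
    rw [Multiset.length_toList, hcard]
  have hlen2 : (p.roots.toList.map (fun a => X - C a)).length = p.natDegree := by
    rw [List.length_map]; exact hlen
  refine ⟨fun i => p.roots.toList.get (Fin.cast hlen.symm i), fun i => ?_, ?_⟩
  · have hmem : p.roots.toList.get (Fin.cast hlen.symm i) ∈ p.roots := by
      rw [← Multiset.mem_toList]
      simp [List.get_eq_getElem]
    exact isRoot_of_mem_roots hmem
  · have h1 : (Multiset.map (fun a => X - C a) p.roots).prod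
        = (p.roots.toList.map (fun a => X - C a)).prod := by
      conv_lhs => rw [← Multiset.coe_toList p.roots]
      rw [Multiset.map_coe, Multiset.prod_coe]
    calc p = C p.leadingCoeff * (Multiset.map (fun a => X - C a) p.roots).prod :=
            hs.eq_prod_roots
    _ = C p.leadingCoeff * (p.roots.toList.map (fun a => X - C a)).prod := by rw [h1]
    _ = C p.leadingCoeff * ∏ i : Fin p.natDegree,
          (p.roots.toList.map (fun a => X - C a)).get (Fin.cast hlen2.symm i) := by
            rw [list_fin_prod _ hlen2]
    _ = C p.leadingCoeff * ∏ i : Fin p.natDegree,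
          (X - C (p.roots.toList.get (Fin.cast hlen.symm i))) := by
            congr 1
            apply Finset.prod_congr rfl
            intro i _
            simp [List.get_eq_getElem, List.getElem_map]

lemma eval_derivative_prod_lin {ι : Type*} [DecidableEq ι] (s : Finset ι) (ρ : ι → ℂ) (ξ : ℂ) :
    (derivative (∏ i ∈ s, (X - C (ρ i)))).eval ξ = ∑ i ∈ s, ∏ j ∈ s.erase i, (ξ - ρ j) := by
  induction s using Finset.induction_on with
  | empty => simp
  | @insert a s ha ih =>
    rw [Finset.prod_insert ha, derivative_mul, derivative_X_sub_C, eval_add, eval_mul, eval_mul,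
      eval_one, one_mul, eval_sub, eval_X, eval_C, ih, Finset.sum_insert ha,
      Finset.erase_insert ha, Finset.mul_sum]
    rw [eval_prod]
    simp only [eval_sub, eval_X, eval_C]
    congr 1
    apply Finset.sum_congr rfl
    intro i hi
    have hne : i ≠ a := fun h => ha (h ▸ hi)
    rw [Finset.erase_insert_of_ne hne.symm, Finset.prod_insert (fun h => ha (Finset.erase_subset _ _ h))]

lemma exists_fin_roots' (p : Polynomial ℂ) {m : ℕ} (hm : p.natDegree = m) :
    ∃ ρ : Fin m → ℂ, (∀ i, p.IsRoot (ρ i)) ∧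
      p = C p.leadingCoeff * ∏ i, (X - C (ρ i)) := by
  subst hm; exact exists_fin_roots p

lemma re_mul_inv (z w : ℂ) (hw : w ≠ 0) :
    (z * w⁻¹).re = (z * (starRingEnd ℂ) w).re / Complex.normSq w := by
  have hns : Complex.normSq w ≠ 0 := (Complex.normSq_pos.2 hw).ne'
  rw [Complex.inv_def]
  have h : z * ((starRingEnd ℂ) w * ((Complex.normSq w)⁻¹ : ℝ)) =
      (z * (starRingEnd ℂ) w) * ((Complex.normSq w)⁻¹ : ℝ) := by ring
  rw [h, Complex.mul_re]
  simp only [Complex.ofReal_re, Complex.ofReal_im, mul_zero, sub_zero]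
  rw [div_eq_mul_inv]

lemma laguerre_step {d : ℕ} (hd : 1 ≤ d) (q : Polynomial ℂ) (hq : q.natDegree ≤ d)
    (hnv : ∀ u : ℂ, ‖u‖ ≤ 1 → q.eval u ≠ 0)
    {ξ w : ℂ} (hξ : ‖ξ‖ ≤ 1) (hw : ‖w‖ ≤ 1) :
    (d : ℂ) * q.eval ξ + (w - ξ) * q.derivative.eval ξ ≠ 0 := by
  intro heq
  obtain ⟨m, hmdeg⟩ : ∃ k, q.natDegree = k := ⟨_, rfl⟩
  obtain ⟨ρ, hroot, hfac⟩ := exists_fin_roots' q hmdeg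
  rw [hmdeg] at hq
  have hρ : ∀ i, 1 < ‖ρ i‖ := by
    intro i
    by_contra hle
    exact hnv (ρ i) (le_of_not_gt hle) (hroot i)
  have hqξ : q.eval ξ ≠ 0 := hnv ξ hξ
  have hfactor : ∀ i, ξ - ρ i ≠ 0 := by
    intro i h
    have h2 : ξ = ρ i := by linear_combination h
    rw [h2] at hξ
    exact absurd hξ (not_le.2 (hρ i))
  have hevalq : q.eval ξ = q.leadingCoeff * ∏ i, (ξ - ρ i) := by
    conv_lhs => rw [hfac]
    rw [eval_mul, eval_C, eval_prod]
    simp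
  set S : ℂ := ∑ i, (ξ - ρ i)⁻¹ with hS
  have hterm : ∀ i, ∏ j ∈ Finset.univ.erase i, (ξ - ρ j) = (∏ j, (ξ - ρ j)) * (ξ - ρ i)⁻¹ := by
    intro i
    rw [← Finset.prod_erase_mul Finset.univ _ (Finset.mem_univ i), mul_assoc,
      mul_inv_cancel₀ (hfactor i), mul_one]
  have hevald : q.derivative.eval ξ = q.eval ξ * S := by
    conv_lhs => rw [hfac]
    rw [derivative_C_mul, eval_C_mul, eval_derivative_prod_lin]
    have h7 : ∑ i, ∏ j ∈ Finset.univ.erase i, (ξ - ρ j) = (∏ j, (ξ - ρ j)) * S := by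
      rw [hS, Finset.mul_sum]
      exact Finset.sum_congr rfl fun i _ => hterm i
    rw [h7, hevalq]
    ring
  have hE : (d : ℂ) + (w - ξ) * S = 0 := by
    have h2 : q.eval ξ * ((d : ℂ) + (w - ξ) * S) = 0 := by
      rw [hevald] at heq; linear_combination heq
    rcases mul_eq_zero.1 h2 with h | h
    · exact absurd h hqξ
    · exact h
  have hdC : (d : ℂ) ≠ 0 := Nat.cast_ne_zero.2 (by omega)
  rcases Nat.eq_zero_or_pos m with hm0 | hmpos
  · subst hm0
    rw [hS] at hE
    simp at hE
    omega
  have hne : Nonempty (Fin m) := ⟨⟨0, hmpos⟩⟩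
  have hunne : (Finset.univ : Finset (Fin m)).Nonempty := Finset.univ_nonempty
  have hξw : ξ - w ≠ 0 := by
    intro h
    have hwξ : w - ξ = 0 := by linear_combination -h
    rw [hwξ, zero_mul, add_zero] at hE
    exact hdC hE
  have hSval : S = (d : ℂ) * (ξ - w)⁻¹ := by
    field_simp at hE ⊢
    linear_combination -hE
  have hmd : m ≤ d := hq
  have hcard : (Finset.univ : Finset (Fin m)).card = m := by simp
  rcases lt_or_eq_of_le hξ with hξlt | hξeq
  · -- case |ξ| < 1
    have hns : Complex.normSq ξ < 1 := by
      rw [Complex.normSq_eq_norm_sq]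
      nlinarith [norm_nonneg ξ]
    set t : ℝ := 1 - Complex.normSq ξ with ht
    have htpos : 0 < t := by rw [ht]; linarith
    set B : Fin m → ℂ := fun i => (1 - (starRingEnd ℂ) ξ * ρ i) * (ξ - ρ i)⁻¹ with hB
    have hBlt : ∀ i, ‖B i‖ < 1 := by
      intro i
      have h1 := normSq_helper ξ (ρ i)
      have h2 : 1 < Complex.normSq (ρ i) := by
        rw [Complex.normSq_eq_norm_sq]; nlinarith [hρ i]
      have h4 : ‖1 - (starRingEnd ℂ) ξ * ρ i‖ < ‖ξ - ρ i‖ := by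
        have e1 := Complex.sq_norm (1 - (starRingEnd ℂ) ξ * ρ i)
        have e2 := Complex.sq_norm (ξ - ρ i)
        nlinarith [norm_nonneg (1 - (starRingEnd ℂ) ξ * ρ i),
          norm_nonneg (ξ - ρ i)]
      have hpos : 0 < ‖ξ - ρ i‖ := by
        simpa [norm_pos_iff] using hfactor i
      rw [hB]
      simp only [norm_mul, norm_inv]
      rw [← div_eq_mul_inv, div_lt_one hpos]
      exact h4
    have hconj_mul : (starRingEnd ℂ) ξ * ξ = ((Complex.normSq ξ : ℝ) : ℂ) := by
      rw [mul_comm, Complex.mul_conj]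
    have hid : ∀ u : ℂ, ξ - u ≠ 0 →
        (1 - (starRingEnd ℂ) ξ * u) * (ξ - u)⁻¹ = (t : ℂ) * (ξ - u)⁻¹ + (starRingEnd ℂ) ξ := by
      intro u hu
      field_simp
      rw [ht]
      push_cast
      linear_combination -hconj_mul
    have hBsum : ∑ i, B i = (t : ℂ) * S + (m : ℂ) * (starRingEnd ℂ) ξ := by
      have h8 : ∑ i, B i = ∑ i, ((t : ℂ) * (ξ - ρ i)⁻¹ + (starRingEnd ℂ) ξ) := by
        apply Finset.sum_congr rfl
        intro i _
        rw [hB]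
        exact hid (ρ i) (hfactor i)
      rw [h8, Finset.sum_add_distrib, Finset.sum_const, hcard, nsmul_eq_mul, hS,
        Finset.mul_sum]
    -- key identity
    have hkey : (d : ℂ) * ((1 - (starRingEnd ℂ) ξ * w) * (ξ - w)⁻¹)
        = (∑ i, B i) + ((d : ℂ) - (m : ℂ)) * (starRingEnd ℂ) ξ := by
      rw [hBsum, hid w hξw]
      rw [hSval]
      ring
    -- bound the sum
    have habsB : ‖∑ i, B i‖ < (m : ℝ) := by
      calc ‖∑ i, B i‖ ≤ ∑ i, ‖B i‖ :=
            norm_sum_le _ _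
      _ < ∑ _i : Fin m, (1 : ℝ) := Finset.sum_lt_sum_of_nonempty hunne (fun i _ => hBlt i)
      _ = (m : ℝ) := by rw [Finset.sum_const, hcard, nsmul_eq_mul, mul_one]
    have habsu : ‖(1 - (starRingEnd ℂ) ξ * w) * (ξ - w)⁻¹‖ < 1 := by
      have h9 : ‖(d : ℂ) * ((1 - (starRingEnd ℂ) ξ * w) * (ξ - w)⁻¹)‖ < (d : ℝ) := by
        calc ‖(d : ℂ) * ((1 - (starRingEnd ℂ) ξ * w) * (ξ - w)⁻¹)‖
            ≤ ‖∑ i, B i‖ + ‖((d : ℂ) - (m : ℂ)) * (starRingEnd ℂ) ξ‖ := by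
              rw [hkey]; exact norm_add_le _ _
        _ < (m : ℝ) + ((d : ℝ) - (m : ℝ)) * 1 := by
              have h10 : ‖((d : ℂ) - (m : ℂ)) * (starRingEnd ℂ) ξ‖
                  ≤ ((d : ℝ) - (m : ℝ)) * 1 := by
                rw [norm_mul, Complex.norm_conj]
                have h11 : ‖(d : ℂ) - (m : ℂ)‖ = (d : ℝ) - (m : ℝ) := by
                  rw [show ((d : ℂ) - (m : ℂ)) = (((d - m : ℕ) : ℝ) : ℂ) by push_cast [Nat.cast_sub hmd]; ring]
                  rw [Complex.norm_real]
                  rw [Real.norm_of_nonneg (by positivity)]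
                  push_cast [Nat.cast_sub hmd]; ring
                rw [h11]
                apply mul_le_mul_of_nonneg_left hξ
                have : (m : ℝ) ≤ (d : ℝ) := by exact_mod_cast hmd
                linarith
              exact add_lt_add_of_lt_of_le habsB h10
        _ = (d : ℝ) := by ring
      rw [norm_mul, Complex.norm_natCast] at h9
      have hdpos : (0 : ℝ) < d := by exact_mod_cast hd
      nlinarith [norm_nonneg ((1 - (starRingEnd ℂ) ξ * w) * (ξ - w)⁻¹)]
    -- contradiction
    have hposw : 0 < ‖ξ - w‖ := by
      simpa [norm_pos_iff] using hξw
    have h12 : ‖1 - (starRingEnd ℂ) ξ * w‖ < ‖ξ - w‖ := by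
      rw [norm_mul, norm_inv, ← div_eq_mul_inv, div_lt_one hposw] at habsu
      exact habsu
    have h13 := normSq_helper ξ w
    have hnsw : Complex.normSq w ≤ 1 := by
      rw [Complex.normSq_eq_norm_sq]; nlinarith [norm_nonneg w]
    have e1 := Complex.sq_norm (1 - (starRingEnd ℂ) ξ * w)
    have e2 := Complex.sq_norm (ξ - w)
    nlinarith [norm_nonneg (1 - (starRingEnd ℂ) ξ * w), norm_nonneg (ξ - w)]
  · -- case |ξ| = 1
    have hnsξ : Complex.normSq ξ = 1 := by
      rw [Complex.normSq_eq_norm_sq, hξeq]; norm_num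
    have hRelt : ∀ i, (ξ * (ξ - ρ i)⁻¹).re < 1 / 2 := by
      intro i
      rw [re_mul_inv _ _ (hfactor i)]
      have hnum : ξ * ((starRingEnd ℂ) (ξ - ρ i)) = ((Complex.normSq ξ : ℝ) : ℂ) - ξ * (starRingEnd ℂ) (ρ i) := by
        rw [map_sub, mul_sub, Complex.mul_conj]
      have hden : Complex.normSq (ξ - ρ i)
          = Complex.normSq ξ - 2 * (ξ * (starRingEnd ℂ) (ρ i)).re + Complex.normSq (ρ i) := by
        rw [Complex.normSq_sub]; ring
      have hdenpos : 0 < Complex.normSq (ξ - ρ i) := Complex.normSq_pos.2 (hfactor i)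
      rw [hnum]
      rw [div_lt_iff₀ hdenpos, hden, hnsξ]
      have h2 : 1 < Complex.normSq (ρ i) := by
        rw [Complex.normSq_eq_norm_sq]; nlinarith [hρ i]
      simp only [Complex.sub_re, Complex.ofReal_re]
      linarith [h2, hnsξ]
    have hRew : 1 / 2 ≤ (ξ * (ξ - w)⁻¹).re := by
      rw [re_mul_inv _ _ hξw]
      have hnum : ξ * ((starRingEnd ℂ) (ξ - w)) = ((Complex.normSq ξ : ℝ) : ℂ) - ξ * (starRingEnd ℂ) w := by
        rw [map_sub, mul_sub, Complex.mul_conj]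
      have hden : Complex.normSq (ξ - w)
          = Complex.normSq ξ - 2 * (ξ * (starRingEnd ℂ) w).re + Complex.normSq w := by
        rw [Complex.normSq_sub]; ring
      have hdenpos : 0 < Complex.normSq (ξ - w) := Complex.normSq_pos.2 hξw
      rw [hnum]
      rw [le_div_iff₀ hdenpos, hden, hnsξ]
      have hnsw : Complex.normSq w ≤ 1 := by
        rw [Complex.normSq_eq_norm_sq]; nlinarith [norm_nonneg w]
      simp only [Complex.sub_re, Complex.ofReal_re]
      linarith [hnsw, hnsξ]
    have hresum : (ξ * S).re = ∑ i, (ξ * (ξ - ρ i)⁻¹).re := by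
      rw [hS, Finset.mul_sum, Complex.re_sum]
    have hlt : (ξ * S).re < (m : ℝ) * (1 / 2) := by
      rw [hresum]
      calc ∑ i, (ξ * (ξ - ρ i)⁻¹).re < ∑ _i : Fin m, (1 / 2 : ℝ) :=
            Finset.sum_lt_sum_of_nonempty hunne (fun i _ => hRelt i)
      _ = (m : ℝ) * (1 / 2) := by rw [Finset.sum_const, hcard, nsmul_eq_mul]
    have heq2 : ξ * S = (d : ℂ) * (ξ * (ξ - w)⁻¹) := by
      rw [hSval]; ring
    have hge : (d : ℝ) * (1 / 2) ≤ (ξ * S).re := by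
      rw [heq2]
      have h14 : ((d : ℂ) * (ξ * (ξ - w)⁻¹)).re = (d : ℝ) * (ξ * (ξ - w)⁻¹).re := by
        rw [show ((d : ℕ) : ℂ) = (((d : ℕ) : ℝ) : ℂ) by push_cast; ring]
        rw [Complex.re_ofReal_mul]
      rw [h14]
      apply mul_le_mul_of_nonneg_left hRew
      positivity
    have hmdR : (m : ℝ) ≤ (d : ℝ) := by exact_mod_cast hmd
    linarith [hlt, hge, hmdR]

section PL

variable {n : ℕ} {w : ℂ} {q : Polynomial ℂ}

/-- the polar-derivative style contraction -/
noncomputable def polarQ (n : ℕ) (w : ℂ) (q : Polynomial ℂ) : Polynomial ℂ :=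
  C (((n + 1 : ℕ) : ℂ))⁻¹ * (C ((n + 1 : ℕ) : ℂ) * q + (C w - X) * derivative q)

lemma coeff_polarQ (k : ℕ) :
    (polarQ n w q).coeff k = (((n + 1 : ℕ) : ℂ))⁻¹ *
      ((((n + 1 : ℕ) : ℂ) - (k : ℂ)) * q.coeff k + w * ((k : ℂ) + 1) * q.coeff (k + 1)) := by
  rw [polarQ, coeff_C_mul, coeff_add, coeff_C_mul, sub_mul, coeff_sub, coeff_C_mul,
    coeff_derivative]
  congr 1
  rcases k with _ | k
  · simp [coeff_derivative]
  · rw [coeff_X_mul, coeff_derivative]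
    push_cast
    ring

lemma natDegree_polarQ (hq : q.natDegree ≤ n + 1) : (polarQ n w q).natDegree ≤ n := by
  rw [natDegree_le_iff_coeff_eq_zero]
  intro N hN
  rw [coeff_polarQ]
  rcases eq_or_lt_of_le (Nat.succ_le_of_lt hN) with h | h
  · -- N = n + 1
    have h1 : q.coeff (N + 1) = 0 := coeff_eq_zero_of_natDegree_lt (by omega)
    have h2 : (((n + 1 : ℕ) : ℂ) - (N : ℂ)) = 0 := by
      rw [← h]; push_cast; ring
    rw [h1, h2]
    ring
  · have h1 : q.coeff (N + 1) = 0 := coeff_eq_zero_of_natDegree_lt (by omega)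
    have h2 : q.coeff N = 0 := coeff_eq_zero_of_natDegree_lt (by omega)
    rw [h1, h2]
    ring

lemma eval_polarQ (u : ℂ) :
    (polarQ n w q).eval u = (((n + 1 : ℕ) : ℂ))⁻¹ *
      (((n + 1 : ℕ) : ℂ) * q.eval u + (w - u) * q.derivative.eval u) := by
  rw [polarQ]
  simp [eval_mul, eval_add, eval_sub, eval_C, eval_X]

lemma polarQ_nonvanishing (hq : q.natDegree ≤ n + 1)
    (hnv : ∀ u : ℂ, ‖u‖ ≤ 1 → q.eval u ≠ 0) (hw : ‖w‖ ≤ 1) :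
    ∀ u : ℂ, ‖u‖ ≤ 1 → (polarQ n w q).eval u ≠ 0 := by
  intro u hu
  rw [eval_polarQ]
  apply mul_ne_zero
  · exact inv_ne_zero (by exact_mod_cast Nat.succ_ne_zero n)
  · exact laguerre_step (by omega) q hq hnv hu hw

lemma choose_key {k : ℕ} (hk : k ≤ n) :
    (polarQ n w q).coeff k / (n.choose k : ℂ) =
      q.coeff k / ((n + 1).choose k : ℂ) + w * q.coeff (k + 1) / ((n + 1).choose (k + 1) : ℂ) := by
  have c2 : (n + 1) * n.choose k = (n + 1).choose (k + 1) * (k + 1) :=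
    Nat.add_one_mul_choose_eq n k
  have c1 : (n + 1).choose k * (n + 1 - k) = (n + 1) * n.choose k := by
    have e1 : (n + 1).choose k = (n + 1).choose (n + 1 - k) :=
      (Nat.choose_symm (by omega)).symm
    have e2 : (n + 1) * n.choose (n - k) = (n + 1).choose (n - k + 1) * (n - k + 1) :=
      Nat.add_one_mul_choose_eq n (n - k)
    have e3 : n.choose (n - k) = n.choose k := Nat.choose_symm hk
    have e4 : n - k + 1 = n + 1 - k := by omega
    rw [e1, ← e4, ← e3, e2]
  have hch1 : ((n.choose k : ℕ) : ℂ) ≠ 0 := Nat.cast_ne_zero.2 (Nat.choose_pos hk).ne'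
  have hch2 : (((n + 1).choose k : ℕ) : ℂ) ≠ 0 :=
    Nat.cast_ne_zero.2 (Nat.choose_pos (by omega)).ne'
  have hch3 : (((n + 1).choose (k + 1) : ℕ) : ℂ) ≠ 0 :=
    Nat.cast_ne_zero.2 (Nat.choose_pos (by omega)).ne'
  have hN : (((n + 1 : ℕ) : ℂ)) ≠ 0 := Nat.cast_ne_zero.2 (by omega)
  have c1C : ((n + 1).choose k : ℂ) * (((n + 1 : ℕ) : ℂ) - (k : ℂ)) =
      ((n + 1 : ℕ) : ℂ) * (n.choose k : ℂ) := by
    have := congrArg (fun t : ℕ => (t : ℂ)) c1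
    push_cast [Nat.cast_sub (show k ≤ n + 1 by omega)] at this
    push_cast
    linear_combination this
  have c2C : ((n + 1 : ℕ) : ℂ) * (n.choose k : ℂ) =
      ((n + 1).choose (k + 1) : ℂ) * ((k : ℂ) + 1) := by
    have := congrArg (fun t : ℕ => (t : ℂ)) c2
    push_cast at this ⊢
    linear_combination this
  have hA : (((n + 1 : ℕ) : ℂ) - (k : ℂ)) / (((n + 1 : ℕ) : ℂ) * (n.choose k : ℂ))
      = 1 / ((n + 1).choose k : ℂ) := by
    rw [div_eq_div_iff (mul_ne_zero hN hch1) hch2]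
    linear_combination c1C
  have hB : ((k : ℂ) + 1) / (((n + 1 : ℕ) : ℂ) * (n.choose k : ℂ))
      = 1 / ((n + 1).choose (k + 1) : ℂ) := by
    rw [div_eq_div_iff (mul_ne_zero hN hch1) hch3]
    linear_combination -c2C
  calc (polarQ n w q).coeff k / (n.choose k : ℂ)
      = q.coeff k * ((((n + 1 : ℕ) : ℂ) - (k : ℂ)) / (((n + 1 : ℕ) : ℂ) * (n.choose k : ℂ)))
        + (w * q.coeff (k + 1)) * (((k : ℂ) + 1) / (((n + 1 : ℕ) : ℂ) * (n.choose k : ℂ))) := by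
        rw [coeff_polarQ]
        field_simp
  _ = q.coeff k / ((n + 1).choose k : ℂ) + w * q.coeff (k + 1) / ((n + 1).choose (k + 1) : ℂ) := by
        rw [hA, hB]
        ring

end PL

lemma polarization {ι : Type*} [DecidableEq ι] (s : Finset ι) :
    ∀ (q : Polynomial ℂ), q.natDegree ≤ s.card →
    (∀ u : ℂ, ‖u‖ ≤ 1 → q.eval u ≠ 0) →
    ∀ x : ι → ℂ, (∀ i ∈ s, ‖x i‖ ≤ 1) →
    (∑ T ∈ s.powerset, q.coeff T.card / (s.card.choose T.card : ℂ) * ∏ i ∈ T, x i) ≠ 0 := by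
  induction s using Finset.induction_on with
  | empty =>
    intro q hdeg hnv x hx
    simp only [Finset.powerset_empty, Finset.sum_singleton, Finset.card_empty,
      Finset.prod_empty, Nat.choose_self, Nat.cast_one, div_one, mul_one]
    rw [Polynomial.coeff_zero_eq_eval_zero]
    exact hnv 0 (by simp)
  | @insert a s ha ih =>
    intro q hdeg hnv x hx
    have hcard : (insert a s).card = s.card + 1 := Finset.card_insert_of_notMem ha
    set n := s.card with hn
    have hdeg' : q.natDegree ≤ n + 1 := by rw [← hcard]; exact hdeg
    have hwb : ‖x a‖ ≤ 1 := hx a (Finset.mem_insert_self a s)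
    have hQdeg : (polarQ n (x a) q).natDegree ≤ n := natDegree_polarQ hdeg'
    have hQnv := polarQ_nonvanishing hdeg' hnv hwb
    have hIH := ih (polarQ n (x a) q) hQdeg hQnv x (fun i hi => hx i (Finset.mem_insert_of_mem hi))
    intro hzero
    apply hIH
    rw [← hzero]
    rw [Finset.sum_powerset_insert ha]
    rw [← Finset.sum_add_distrib]
    apply Finset.sum_congr rfl
    intro T hT
    have hTs : T ⊆ s := Finset.mem_powerset.1 hT
    have haT : a ∉ T := fun h => ha (hTs h)
    have hTcard : T.card ≤ n := Finset.card_le_card hTs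
    have hicard : (insert a T).card = T.card + 1 := Finset.card_insert_of_notMem haT
    rw [hicard, hcard, Finset.prod_insert haT]
    rw [choose_key hTcard]
    ring

lemma geom_poly_coeff (n k : ℕ) :
    (∑ j ∈ Finset.range (n + 1), (X : Polynomial ℂ) ^ j).coeff k
      = if k < n + 1 then 1 else 0 := by
  rw [finset_sum_coeff]
  simp only [coeff_X_pow]
  simp only [eq_comm (a := k)]
  rw [Finset.sum_ite_eq' (Finset.range (n + 1)) k (fun _ => (1 : ℂ))]
  simp [Finset.mem_range]

lemma geom_poly_natDegree (n : ℕ) :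
    (∑ j ∈ Finset.range (n + 1), (X : Polynomial ℂ) ^ j).natDegree = n := by
  apply le_antisymm
  · rw [natDegree_le_iff_coeff_eq_zero]
    intro N hN
    rw [geom_poly_coeff]
    simp only [ite_eq_right_iff]
    intro h
    omega
  · apply le_natDegree_of_ne_zero
    rw [geom_poly_coeff]
    simp

lemma exists_zeta (n : ℕ) : ∃ ζ : Fin n → ℂ, (∀ i, ‖ζ i‖ ≤ 1) ∧
    ∀ y : ℂ, ∏ i, (1 + y * ζ i) = ∑ j ∈ Finset.range (n + 1), y ^ j := by
  set Pn : Polynomial ℂ := ∑ j ∈ Finset.range (n + 1), (X : Polynomial ℂ) ^ j with hPn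
  have hlc : Pn.leadingCoeff = 1 := by
    rw [leadingCoeff, geom_poly_natDegree, hPn, geom_poly_coeff]
    simp
  obtain ⟨ρ, hroot, hfac⟩ := exists_fin_roots' Pn (geom_poly_natDegree n)
  have habs : ∀ i, ‖ρ i‖ = 1 := by
    intro i
    have hev : Pn.eval (ρ i) = 0 := hroot i
    have hev2 : (∑ j ∈ Finset.range (n + 1), (ρ i) ^ j) = 0 := by
      rw [hPn] at hev
      simpa [eval_finset_sum] using hev
    have hpow : (ρ i) ^ (n + 1) = 1 := by
      have := geom_sum_mul (ρ i) (n + 1)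
      rw [hev2, zero_mul] at this
      linear_combination -this
    have habs1 : ‖ρ i‖ ^ (n + 1) = 1 := by
      rw [← norm_pow, hpow, norm_one]
    rcases lt_trichotomy (‖ρ i‖) 1 with h | h | h
    · exfalso
      have := pow_lt_one₀ (norm_nonneg _) h (Nat.succ_ne_zero n)
      rw [habs1] at this; exact lt_irrefl _ this
    · exact h
    · exfalso
      have := one_lt_pow₀ h (Nat.succ_ne_zero n)
      rw [habs1] at this; exact lt_irrefl _ this
  refine ⟨fun i => -ρ i, fun i => by rw [norm_neg]; rw [habs i], ?_⟩
  intro y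
  rcases eq_or_ne y 0 with rfl | hy
  · simp
  · have h1 : Pn.eval (1 / y) = ∏ i, (1 / y - ρ i) := by
      conv_lhs => rw [hfac]
      rw [eval_mul, eval_C, hlc, one_mul, eval_prod]
      simp
    have h2 : ∏ i, (1 + y * -ρ i) = y ^ n * Pn.eval (1 / y) := by
      rw [h1]
      have hyn : (y : ℂ) ^ n = ∏ _i : Fin n, y := by
        rw [Finset.prod_const, Finset.card_univ, Fintype.card_fin]
      rw [hyn, ← Finset.prod_mul_distrib]
      apply Finset.prod_congr rfl
      intro i _
      field_simp
      ring
    have h3 : Pn.eval (1 / y) = ∑ j ∈ Finset.range (n + 1), (1 / y) ^ j := by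
      rw [hPn]
      simp [eval_finset_sum]
    have h4 : y ^ n * ∑ j ∈ Finset.range (n + 1), (1 / y) ^ j
        = ∑ j ∈ Finset.range (n + 1), y ^ j := by
      rw [Finset.mul_sum]
      have h5 : ∀ j ∈ Finset.range (n + 1), y ^ n * (1 / y) ^ j = y ^ (n - j) := by
        intro j hj
        rw [Finset.mem_range] at hj
        rw [one_div, inv_pow, ← pow_sub₀ y hy (by omega)]
      rw [Finset.sum_congr rfl h5]
      have := Finset.sum_range_reflect (fun j => y ^ j) (n + 1)
      simpa using this
    calc ∏ i, (1 + y * -ρ i) = y ^ n * Pn.eval (1 / y) := h2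
    _ = ∑ j ∈ Finset.range (n + 1), y ^ j := by rw [h3]; exact h4

lemma exists_zeta_esymm (n : ℕ) : ∃ ζ : Fin n → ℂ, (∀ i, ‖ζ i‖ ≤ 1) ∧
    ∀ k, k ≤ n →
      (∑ T ∈ Finset.univ.filter (fun T : Finset (Fin n) => T.card = k), ∏ i ∈ T, ζ i) = 1 := by
  obtain ⟨ζ, hb, hid⟩ := exists_zeta n
  refine ⟨ζ, hb, ?_⟩
  -- polynomial A
  set A : Polynomial ℂ := ∑ T : Finset (Fin n), C (∏ i ∈ T, ζ i) * X ^ T.card with hA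
  have hevalA : ∀ y : ℂ, A.eval y = ∏ i, (1 + y * ζ i) := by
    intro y
    rw [hA, eval_finset_sum]
    simp only [eval_mul, eval_C, eval_pow, eval_X]
    have expand : ∏ i : Fin n, (y * ζ i + 1) =
        ∑ T ∈ (Finset.univ : Finset (Fin n)).powerset,
          (∏ i ∈ T, (y * ζ i)) * ∏ i ∈ Finset.univ \ T, (1 : ℂ) := by
      exact Finset.prod_add _ _ _
    have e2 : ∏ i : Fin n, (1 + y * ζ i) = ∏ i : Fin n, (y * ζ i + 1) := by
      apply Finset.prod_congr rfl; intro i _; ring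
    rw [e2, expand, Finset.powerset_univ]
    apply Finset.sum_congr rfl
    intro T _
    rw [Finset.prod_mul_distrib, Finset.prod_const, Finset.prod_const_one]
    ring
  have hAB : A = ∑ j ∈ Finset.range (n + 1), (X : Polynomial ℂ) ^ j := by
    apply Polynomial.funext
    intro y
    rw [hevalA, hid y]
    simp [eval_finset_sum]
  intro k hk
  have hcoeffA : A.coeff k = ∑ T ∈ Finset.univ.filter (fun T : Finset (Fin n) => T.card = k),
      ∏ i ∈ T, ζ i := by
    rw [hA, finset_sum_coeff]
    simp only [coeff_C_mul, coeff_X_pow]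
    rw [Finset.sum_filter]
    apply Finset.sum_congr rfl
    intro T _
    by_cases h : T.card = k
    · simp [h]
    · have h2 : k ≠ T.card := fun hh => h hh.symm
      simp [h2, h]
  rw [← hcoeffA, hAB, geom_poly_coeff]
  simp [Nat.lt_succ_of_le hk]

lemma coincidence (n : ℕ) (c : ℕ → ℂ) :
    ∃ ξ : ℂ, ‖ξ‖ ≤ 1 ∧
      ∑ k ∈ Finset.range (n + 1), c k / (n.choose k : ℂ)
        = ∑ k ∈ Finset.range (n + 1), c k * ξ ^ k := by
  by_contra hcon
  push_neg at hcon
  set val : ℂ := ∑ k ∈ Finset.range (n + 1), c k / (n.choose k : ℂ) with hval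
  set q : Polynomial ℂ := (∑ k ∈ Finset.range (n + 1), C (c k) * X ^ k) - C val with hq
  have hcoeffq : ∀ k : ℕ, q.coeff k
      = (if k < n + 1 then c k else 0) - (if k = 0 then val else 0) := by
    intro k
    rw [hq, coeff_sub, finset_sum_coeff, coeff_C]
    congr 1
    simp only [coeff_C_mul, coeff_X_pow]
    simp only [mul_ite, mul_one, mul_zero]
    simp only [eq_comm (a := k)]
    rw [Finset.sum_ite_eq' (Finset.range (n + 1)) k c]
    simp [Finset.mem_range]
  have hdegq : q.natDegree ≤ n := by
    rw [natDegree_le_iff_coeff_eq_zero]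
    intro N hN
    rw [hcoeffq]
    have h1 : ¬(N < n + 1) := by omega
    have h2 : ¬(N = 0) := by omega
    simp [h1, h2]
  have hnvq : ∀ u : ℂ, ‖u‖ ≤ 1 → q.eval u ≠ 0 := by
    intro u hu
    rw [hq]
    simp only [eval_sub, eval_finset_sum, eval_mul, eval_C, eval_pow, eval_X]
    intro h
    exact hcon u hu (by linear_combination -h)
  obtain ⟨ζ, hζb, hζe⟩ := exists_zeta_esymm n
  have hP := polarization (Finset.univ : Finset (Fin n)) q
    (by rw [Finset.card_univ, Fintype.card_fin]; exact hdegq) hnvq ζ (fun i _ => hζb i)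
  apply hP
  rw [Finset.card_univ, Fintype.card_fin, Finset.powerset_univ]
  rw [← Finset.sum_fiberwise_of_maps_to (g := fun T : Finset (Fin n) => T.card)
    (t := Finset.range (n + 1)) (fun T _ => by
      rw [Finset.mem_range, Nat.lt_succ_iff]
      calc T.card ≤ (Finset.univ : Finset (Fin n)).card := Finset.card_le_card (Finset.subset_univ T)
      _ = n := by rw [Finset.card_univ, Fintype.card_fin])]
  have inner : ∀ k ∈ Finset.range (n + 1),
      (∑ T ∈ Finset.univ.filter (fun T : Finset (Fin n) => T.card = k),
        q.coeff T.card / (n.choose T.card : ℂ) * ∏ i ∈ T, ζ i) = q.coeff k / (n.choose k : ℂ) := by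
    intro k hk
    rw [Finset.mem_range, Nat.lt_succ_iff] at hk
    have e1 : ∀ T ∈ Finset.univ.filter (fun T : Finset (Fin n) => T.card = k),
        q.coeff T.card / (n.choose T.card : ℂ) * ∏ i ∈ T, ζ i
          = q.coeff k / (n.choose k : ℂ) * ∏ i ∈ T, ζ i := by
      intro T hT
      rw [Finset.mem_filter] at hT
      rw [hT.2]
    rw [Finset.sum_congr rfl e1, ← Finset.mul_sum, hζe k hk, mul_one]
  rw [Finset.sum_congr rfl inner]
  have split : ∀ k ∈ Finset.range (n + 1),
      q.coeff k / (n.choose k : ℂ)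
        = c k / (n.choose k : ℂ) - (if k = 0 then val else 0) := by
    intro k hk
    rw [Finset.mem_range] at hk
    rw [hcoeffq k, if_pos hk, sub_div]
    congr 1
    by_cases h0 : k = 0
    · subst h0; simp
    · simp [h0]
  rw [Finset.sum_congr rfl split, Finset.sum_sub_distrib]
  rw [Finset.sum_ite_eq' (Finset.range (n + 1)) 0 (fun _ => val)]
  simp [← hval]

section Graph

variable {V E : Type*} [Fintype V] [DecidableEq V] [Fintype E] [DecidableEq E]

/-- degree of `v` in the spanning subgraph `H` -/
def dg (ε₁ ε₂ : E → V) (H : Finset E) (v : V) : ℕ :=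
  (H.filter fun e => ε₁ e = v).card + (H.filter fun e => ε₂ e = v).card

/-- partially contracted subgraph generating function -/
noncomputable def PW (ε₁ ε₂ : E → V) (z : ℂ) (S : Finset V) (x : E ⊕ E → ℂ) : ℂ :=
  ∑ H : Finset E, z ^ H.card *
    (∏ v ∈ S, ((dg ε₁ ε₂ Finset.univ v).choose (dg ε₁ ε₂ H v) : ℂ)⁻¹) *
    ∏ e ∈ H, ((if ε₁ e ∈ S then 1 else x (Sum.inl e)) * (if ε₂ e ∈ S then 1 else x (Sum.inr e)))

variable (ε₁ ε₂ : E → V)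

lemma prod_if_pow {α : Type*} [DecidableEq α] (H : Finset α) (p : α → Prop) [DecidablePred p]
    (ξ : ℂ) : ∏ e ∈ H, (if p e then ξ else 1) = ξ ^ (H.filter p).card := by
  rw [← Finset.prod_filter_mul_prod_filter_not H p]
  rw [Finset.prod_congr rfl (fun e he => if_pos (Finset.mem_filter.1 he).2)]
  rw [Finset.prod_congr rfl (fun e he => if_neg (Finset.mem_filter.1 he).2)]
  rw [Finset.prod_const, Finset.prod_const_one, mul_one]

lemma dg_le (H : Finset E) (v : V) : dg ε₁ ε₂ H v ≤ dg ε₁ ε₂ Finset.univ v := by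
  unfold dg
  have h1 : (H.filter fun e => ε₁ e = v) ⊆ (Finset.univ.filter fun e => ε₁ e = v) :=
    Finset.filter_subset_filter _ (Finset.subset_univ H)
  have h2 : (H.filter fun e => ε₂ e = v) ⊆ (Finset.univ.filter fun e => ε₂ e = v) :=
    Finset.filter_subset_filter _ (Finset.subset_univ H)
  exact Nat.add_le_add (Finset.card_le_card h1) (Finset.card_le_card h2)

lemma PW_empty (z : ℂ) (x : E ⊕ E → ℂ) :
    PW ε₁ ε₂ z ∅ x = ∏ e : E, (1 + z * x (Sum.inl e) * x (Sum.inr e)) := by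
  unfold PW
  have expand : ∏ e : E, ((z * (x (Sum.inl e) * x (Sum.inr e))) + 1) =
      ∑ T ∈ (Finset.univ : Finset E).powerset,
        (∏ e ∈ T, (z * (x (Sum.inl e) * x (Sum.inr e)))) * ∏ e ∈ Finset.univ \ T, (1 : ℂ) :=
    Finset.prod_add _ _ _
  have e0 : ∏ e : E, (1 + z * x (Sum.inl e) * x (Sum.inr e))
      = ∏ e : E, ((z * (x (Sum.inl e) * x (Sum.inr e))) + 1) := by
    apply Finset.prod_congr rfl; intro e _; ring
  rw [e0, expand, Finset.powerset_univ]
  apply Finset.sum_congr rfl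
  intro H _
  simp only [Finset.prod_empty, mul_one, Finset.notMem_empty, if_false, Finset.prod_const_one]
  simp only [Finset.prod_mul_distrib, Finset.prod_const]

lemma PW_step (z : ℂ) (S : Finset V) (v : V) (hv : v ∉ S) (x : E ⊕ E → ℂ) :
    ∃ ξ : ℂ, ‖ξ‖ ≤ 1 ∧
      PW ε₁ ε₂ z (insert v S) x
        = PW ε₁ ε₂ z S (fun h => if Sum.elim ε₁ ε₂ h = v then ξ else x h) := by
  set dv := dg ε₁ ε₂ Finset.univ v with hdv
  set ψ : E → ℂ := fun e =>
    (if ε₁ e = v then 1 else if ε₁ e ∈ S then 1 else x (Sum.inl e)) *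
    (if ε₂ e = v then 1 else if ε₂ e ∈ S then 1 else x (Sum.inr e)) with hψ
  set c : ℕ → ℂ := fun k =>
    ∑ H ∈ Finset.univ.filter (fun H : Finset E => dg ε₁ ε₂ H v = k),
      z ^ H.card * (∏ v' ∈ S, ((dg ε₁ ε₂ Finset.univ v').choose (dg ε₁ ε₂ H v') : ℂ)⁻¹) *
        ∏ e ∈ H, ψ e with hc
  obtain ⟨ξ, hξ, hcoin⟩ := coincidence dv c
  refine ⟨ξ, hξ, ?_⟩
  have hmaps : ∀ H : Finset E, H ∈ (Finset.univ : Finset (Finset E)) →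
      dg ε₁ ε₂ H v ∈ Finset.range (dv + 1) := by
    intro H _
    rw [Finset.mem_range, Nat.lt_succ_iff, hdv]
    exact dg_le ε₁ ε₂ H v
  -- LHS
  have hLHS : PW ε₁ ε₂ z (insert v S) x = ∑ k ∈ Finset.range (dv + 1), c k / (dv.choose k : ℂ) := by
    unfold PW
    rw [← Finset.sum_fiberwise_of_maps_to hmaps]
    apply Finset.sum_congr rfl
    intro k _
    rw [hc]
    rw [Finset.sum_div]
    apply Finset.sum_congr rfl
    intro H hH
    rw [Finset.mem_filter] at hH
    have hfac : ∀ e : E, ((if ε₁ e ∈ insert v S then 1 else x (Sum.inl e)) *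
        (if ε₂ e ∈ insert v S then 1 else x (Sum.inr e))) = ψ e := by
      intro e
      rw [hψ]
      congr 1
      · by_cases h1 : ε₁ e = v
        · simp [h1]
        · by_cases h2 : ε₁ e ∈ S <;> simp [h1, h2, Finset.mem_insert]
      · by_cases h1 : ε₂ e = v
        · simp [h1]
        · by_cases h2 : ε₂ e ∈ S <;> simp [h1, h2, Finset.mem_insert]
    rw [Finset.prod_congr rfl (fun e _ => hfac e)]
    rw [Finset.prod_insert hv, hH.2]
    rw [← hdv]
    field_simp
  -- RHS
  have hRHS : PW ε₁ ε₂ z S (fun h => if Sum.elim ε₁ ε₂ h = v then ξ else x h)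
      = ∑ k ∈ Finset.range (dv + 1), c k * ξ ^ k := by
    unfold PW
    rw [← Finset.sum_fiberwise_of_maps_to hmaps]
    apply Finset.sum_congr rfl
    intro k _
    rw [hc, Finset.sum_mul]
    apply Finset.sum_congr rfl
    intro H hH
    rw [Finset.mem_filter] at hH
    have hfac : ∀ e : E, ((if ε₁ e ∈ S then 1 else if Sum.elim ε₁ ε₂ (Sum.inl e) = v then ξ else x (Sum.inl e)) *
        (if ε₂ e ∈ S then 1 else if Sum.elim ε₁ ε₂ (Sum.inr e) = v then ξ else x (Sum.inr e)))
        = ((if ε₁ e = v then ξ else 1) * (if ε₂ e = v then ξ else 1)) * ψ e := by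
      intro e
      rw [hψ]
      simp only [Sum.elim_inl, Sum.elim_inr]
      by_cases h1 : ε₁ e = v <;> by_cases h2 : ε₂ e = v <;>
        simp [h1, h2, hv] <;> ring
    rw [Finset.prod_congr rfl (fun e _ => hfac e)]
    rw [Finset.prod_mul_distrib, Finset.prod_mul_distrib,
      prod_if_pow H (fun e => ε₁ e = v) ξ, prod_if_pow H (fun e => ε₂ e = v) ξ]
    rw [← pow_add]
    have hk : (H.filter fun e => ε₁ e = v).card + (H.filter fun e => ε₂ e = v).card = k := hH.2
    rw [hk]
    ring
  rw [hLHS, hRHS, hcoin]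

lemma PW_ne_zero (z : ℂ) (hz : ‖z‖ < 1) (S : Finset V) :
    ∀ x : E ⊕ E → ℂ, (∀ h, ‖x h‖ ≤ 1) → PW ε₁ ε₂ z S x ≠ 0 := by
  induction S using Finset.induction_on with
  | empty =>
    intro x hx
    rw [PW_empty]
    apply Finset.prod_ne_zero_iff.2
    intro e _
    intro h0
    have h1 : z * x (Sum.inl e) * x (Sum.inr e) = -1 := by linear_combination h0
    have h2 : ‖z * x (Sum.inl e) * x (Sum.inr e)‖ = 1 := by rw [h1]; simp
    rw [norm_mul, norm_mul] at h2
    have b1 := hx (Sum.inl e)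
    have b2 := hx (Sum.inr e)
    have s1 : ‖z‖ * ‖x (Sum.inl e)‖ ≤ ‖z‖ :=
      mul_le_of_le_one_right (norm_nonneg z) b1
    have s2 : ‖z‖ * ‖x (Sum.inl e)‖ * ‖x (Sum.inr e)‖
        ≤ ‖z‖ * ‖x (Sum.inl e)‖ :=
      mul_le_of_le_one_right (by positivity) b2
    linarith
  | @insert v S hv ih =>
    intro x hx
    obtain ⟨ξ, hξ, heq⟩ := PW_step ε₁ ε₂ z S v hv x
    rw [heq]
    apply ih
    intro h
    by_cases hc : Sum.elim ε₁ ε₂ h = v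
    · simp [hc, hξ]
    · simp [hc, hx h]

theorem unit_modulus_zeros'
    (deg : Finset E → V → ℕ)
    (hdeg : ∀ (H : Finset E) (v : V),
      deg H v = (H.filter fun e => ε₁ e = v).card + (H.filter fun e => ε₂ e = v).card)
    (z : ℂ)
    (hz : (∑ H : Finset E,
      z ^ H.card / ∏ v : V, ((deg Finset.univ v).choose (deg H v) : ℂ)) = 0) :
    ‖z‖ = 1 := by
  have hdg : ∀ H v, deg H v = dg ε₁ ε₂ H v := fun H v => hdeg H v
  -- rewrite the sum as PW at univ
  have hform : ∀ y : ℂ, (∑ H : Finset E,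
      y ^ H.card / ∏ v : V, ((dg ε₁ ε₂ Finset.univ v).choose (dg ε₁ ε₂ H v) : ℂ))
      = PW ε₁ ε₂ y Finset.univ (fun _ => 0) := by
    intro y
    unfold PW
    apply Finset.sum_congr rfl
    intro H _
    rw [Finset.prod_congr rfl (fun e _ => by
      simp [Finset.mem_univ] : ∀ e ∈ H, ((if ε₁ e ∈ Finset.univ then (1:ℂ) else 0) *
        (if ε₂ e ∈ Finset.univ then 1 else 0)) = 1)]
    rw [Finset.prod_const_one, mul_one, div_eq_mul_inv, ← Finset.prod_inv_distrib]
  simp only [hdg] at hz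
  rw [hform z] at hz
  rcases lt_trichotomy (‖z‖) 1 with hlt | heq | hgt
  · exact absurd hz (PW_ne_zero ε₁ ε₂ z hlt Finset.univ _ (fun h => by simp))
  · exact heq
  · exfalso
    have hz0 : z ≠ 0 := by
      intro h; rw [h] at hgt; simp at hgt; linarith
    have hinv : ‖z⁻¹‖ < 1 := by
      rw [norm_inv]
      have : (0:ℝ) < ‖z‖ := by linarith
      rw [inv_lt_one_iff₀]
      right; exact hgt
    -- complement identity
    have hcompl : PW ε₁ ε₂ z Finset.univ (fun _ => 0)
        = z ^ Fintype.card E * PW ε₁ ε₂ z⁻¹ Finset.univ (fun _ => 0) := by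
      rw [← hform z, ← hform z⁻¹]
      have hbij := Fintype.sum_bijective (fun H : Finset E => Hᶜ)
        (Function.Involutive.bijective (fun H => compl_compl H))
        (fun H : Finset E => z ^ H.card / ∏ v : V, ((dg ε₁ ε₂ Finset.univ v).choose (dg ε₁ ε₂ H v) : ℂ))
        (fun H : Finset E => z ^ (Hᶜ).card / ∏ v : V, ((dg ε₁ ε₂ Finset.univ v).choose (dg ε₁ ε₂ (Hᶜ) v) : ℂ))
        (fun H => by simp only [compl_compl])
      rw [hbij, Finset.mul_sum]
      apply Finset.sum_congr rfl
      intro H _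
      -- degrees of complement
      have hdsum : ∀ v, dg ε₁ ε₂ H v + dg ε₁ ε₂ Hᶜ v = dg ε₁ ε₂ Finset.univ v := by
        intro v
        unfold dg
        have h1 : ∀ (p : E → Prop) [DecidablePred p], (H.filter p).card + (Hᶜ.filter p).card
            = (Finset.univ.filter p).card := by
          intro p hp
          rw [← Finset.card_union_of_disjoint (Finset.disjoint_filter_filter disjoint_compl_right),
            ← Finset.filter_union, Finset.union_compl]
        rw [← h1 (fun e => ε₁ e = v), ← h1 (fun e => ε₂ e = v)]
        ring
      have hchoose : ∀ v, ((dg ε₁ ε₂ Finset.univ v).choose (dg ε₁ ε₂ (Hᶜ) v) : ℂ)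
          = ((dg ε₁ ε₂ Finset.univ v).choose (dg ε₁ ε₂ H v) : ℂ) := by
        intro v
        have h2 := hdsum v
        have h3 : dg ε₁ ε₂ Hᶜ v = dg ε₁ ε₂ Finset.univ v - dg ε₁ ε₂ H v := by omega
        rw [h3, Nat.choose_symm (by omega)]
      have hcard : (Hᶜ).card + H.card = Fintype.card E := by
        rw [Finset.card_compl]
        have := Finset.card_le_univ H
        omega
      have hpow : z ^ (Hᶜ).card = z ^ Fintype.card E * (z⁻¹) ^ H.card := by
        rw [inv_pow, eq_mul_inv_iff_mul_eq₀ (pow_ne_zero _ hz0), ← pow_add, hcard]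
      rw [Finset.prod_congr rfl (fun v _ => hchoose v), hpow]
      ring
    rw [hcompl] at hz
    rcases mul_eq_zero.1 hz with h | h
    · exact pow_ne_zero _ hz0 h
    · exact PW_ne_zero ε₁ ε₂ z⁻¹ hinv Finset.univ _ (fun h' => by simp) h

end Graph

/-- Example 4.9: every zero of
`Σ_{H ⊆ E} y^{#H} / Π_v C(deg(G,v), deg(H,v))` has unit modulus. -/
theorem unit_modulus_zeros
    {V E : Type*} [Fintype V] [DecidableEq V] [Fintype E] [DecidableEq E]
    (ε₁ ε₂ : E → V)   -- endpoints of each edge (a loop has ε₁ e = ε₂ e)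
    (deg : Finset E → V → ℕ)
    (hdeg : ∀ (H : Finset E) (v : V),
      deg H v = (H.filter fun e => ε₁ e = v).card + (H.filter fun e => ε₂ e = v).card)
    (z : ℂ)
    (hz : (∑ H : Finset E,
      z ^ H.card / ∏ v : V, ((deg Finset.univ v).choose (deg H v) : ℂ)) = 0) :
    ‖z‖ = 1 :=
  unit_modulus_zeros' ε₁ ε₂ deg hdeg z hz
end
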